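/- arXiv:2510.07450 — 6 statements merged into one kernel-verified Lean document; each statement's English description precedes it below -/
import Mathlib

section
/- Let δ ∈ [0,1) and let (u_n) be a sequence of positive reals such that u_{n+1}/u_n ≥ 1 + c·n^{-δ} for all n, for some c ∈ (0,1). Then there exists β > 1 such that for all n, d ∈ ℕ, u_{n+d}/u_n ≥ β^{d/(n+d)^δ}. -/
open Real

lemma exp_half_le_aux (x : ℝ) (hx0 : 0 < x) (hx1 : x < 1) : Real.exp (x / 2) ≤ 1 + x := by
  have h1 : 1 - x / 2 ≤ Real.exp (-(x / 2)) := by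
    have := Real.add_one_le_exp (-(x / 2)); linarith
  have h2 : 0 < 1 - x / 2 := by linarith
  have h3 : Real.exp (x / 2) ≤ 1 / (1 - x / 2) := by
    rw [le_div_iff₀ h2]
    calc Real.exp (x / 2) * (1 - x / 2)
        ≤ Real.exp (x / 2) * Real.exp (-(x / 2)) :=
          mul_le_mul_of_nonneg_left h1 (Real.exp_pos _).le
      _ = 1 := by rw [← Real.exp_add]; simp
  refine h3.trans ?_
  rw [div_le_iff₀ h2]; nlinarith

/-- If `δ ∈ [0,1)` and `(u_n)` is a sequence of positive reals with
`u_{n+1}/u_n ≥ 1 + c n^{-δ}` for all `n ≥ 1` (some `c ∈ (0,1)`), then there is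
`β > 1` with `u_{n+d}/u_n ≥ β^{d/(n+d)^δ}` for all `n ≥ 1`, `d ∈ ℕ`. -/
theorem sublacunary_growth (δ : ℝ) (hδ : δ ∈ Set.Ico (0:ℝ) 1)
    (u : ℕ → ℝ) (hu : ∀ n, 0 < u n)
    (c : ℝ) (hc : c ∈ Set.Ioo (0:ℝ) 1)
    (hsub : ∀ n : ℕ, 1 ≤ n → u (n + 1) / u n ≥ 1 + c * (n : ℝ) ^ (-δ)) :
    ∃ β : ℝ, 1 < β ∧ ∀ n : ℕ, 1 ≤ n → ∀ d : ℕ,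
      u (n + d) / u n ≥ β ^ ((d : ℝ) / ((n : ℝ) + (d : ℝ)) ^ δ) := by
  obtain ⟨hc0, hc1⟩ := hc
  obtain ⟨hδ0, hδ1⟩ := hδ
  refine ⟨Real.exp (c / 2), by rw [Real.one_lt_exp_iff]; positivity, ?_⟩
  intro n hn
  have hn1 : (1 : ℝ) ≤ (n : ℝ) := by exact_mod_cast hn
  -- key: u (n+d) / u n ≥ exp ((c/2) * d * (n+d)^(-δ))
  have key : ∀ d : ℕ, u (n + d) / u n ≥
      Real.exp (c / 2 * d * ((n : ℝ) + d) ^ (-δ)) := by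
    intro d
    induction d with
    | zero => simp [div_self (hu n).ne']
    | succ d ih =>
      have hd0 : (0 : ℝ) ≤ (d : ℝ) := Nat.cast_nonneg d
      have hnd1 : (1 : ℝ) ≤ (n : ℝ) + d := by linarith
      have hndpos : (0 : ℝ) < (n : ℝ) + d := by linarith
      have ht1 : ((n : ℝ) + d) ^ (-δ) ≤ 1 :=
        Real.rpow_le_one_of_one_le_of_nonpos hnd1 (by linarith)
      have ht0 : 0 < ((n : ℝ) + d) ^ (-δ) := Real.rpow_pos_of_pos hndpos _
      set t := ((n : ℝ) + d) ^ (-δ) with htdef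
      have hx0 : 0 < c * t := by positivity
      have hx1 : c * t < 1 := by nlinarith
      have hstep : u (n + d + 1) / u (n + d) ≥ 1 + c * t := by
        have := hsub (n + d) (le_trans hn (Nat.le_add_right n d))
        simpa [Nat.cast_add] using this
      have hexp : Real.exp (c / 2 * t) ≤ 1 + c * t := by
        have := exp_half_le_aux (c * t) hx0 hx1
        rw [show c * t / 2 = c / 2 * t by ring] at this
        exact this
      have hsplit : u (n + (d + 1)) / u n =
          (u (n + d + 1) / u (n + d)) * (u (n + d) / u n) := by
        rw [show n + (d + 1) = n + d + 1 from rfl]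
        field_simp
        rw [mul_div_mul_right _ _ (hu (n + d)).ne']
      have hmul : Real.exp (c / 2 * t) * Real.exp (c / 2 * d * t) ≤
          u (n + (d + 1)) / u n := by
        rw [hsplit]
        exact mul_le_mul (le_trans hexp hstep) ih (Real.exp_pos _).le
          (le_trans (by positivity) hstep)
      have hcomb : Real.exp (c / 2 * t) * Real.exp (c / 2 * d * t) =
          Real.exp (c / 2 * (d + 1) * t) := by
        rw [← Real.exp_add]; ring_nf
      have hmono : ((n : ℝ) + (d + 1)) ^ (-δ) ≤ t :=
        Real.rpow_le_rpow_of_nonpos hndpos (by linarith) (by linarith)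
      have hfin : Real.exp (c / 2 * ((d : ℕ) + 1 : ℕ) * ((n : ℝ) + ((d : ℕ) + 1 : ℕ)) ^ (-δ)) ≤
          Real.exp (c / 2 * (d + 1) * t) := by
        apply Real.exp_le_exp.mpr
        push_cast
        have h1 : (0:ℝ) ≤ c / 2 * ((d:ℝ) + 1) := by positivity
        have := mul_le_mul_of_nonneg_left (by push_cast at hmono ⊢; exact hmono) h1
        linarith [this]
      calc Real.exp (c / 2 * ((d + 1 : ℕ) : ℝ) * ((n : ℝ) + ((d + 1 : ℕ) : ℝ)) ^ (-δ))
          ≤ Real.exp (c / 2 * (d + 1) * t) := by push_cast; push_cast at hfin; exact hfin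
        _ = Real.exp (c / 2 * t) * Real.exp (c / 2 * d * t) := hcomb.symm
        _ ≤ u (n + (d + 1)) / u n := hmul
  intro d
  have hndpos : (0 : ℝ) < (n : ℝ) + d := by positivity
  have hrw : Real.exp (c / 2) ^ ((d : ℝ) / ((n : ℝ) + (d : ℝ)) ^ δ) =
      Real.exp (c / 2 * d * ((n : ℝ) + d) ^ (-δ)) := by
    rw [Real.rpow_def_of_pos (Real.exp_pos _), Real.log_exp,
      Real.rpow_neg hndpos.le, div_eq_mul_inv]
    ring_nf
  rw [hrw]
  exact key d
end

section
/- Let a ∈ (0,1), let (u_n) be an increasing sequence of reals with u_1 ≥ 1, and let (I_n) be subintervals of [0,1] with λ(I_n) = n^{-a}. Set X_n(y) = 1 if frac(u_n y) ∈ I_n and 0 otherwise, and σ_n = E(X_n) (expectation with respect to Lebesgue measure on [0,1]). Then there exists a constant C > 0 such that for all n < m, |Cov(X_n, X_m)| ≤ C · m^{-a} · (u_n/u_m + 1/u_n). -/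
open MeasureTheory Filter

/-- The indicator random variable `X_n(y) = 1_{I}(frac(u y))`. -/
noncomputable def Xv (I : Set ℝ) (u y : ℝ) : ℝ :=
  I.indicator (fun _ => (1:ℝ)) (Int.fract (u * y))

namespace CovAux

/-- The preimage set. -/
def S (I : Set ℝ) (u : ℝ) : Set ℝ := (fun y => Int.fract (u * y)) ⁻¹' I

lemma Xv_eq_indicator (I : Set ℝ) (u y : ℝ) :
    Xv I u y = (S I u).indicator (fun _ => (1:ℝ)) y := by
  by_cases h : Int.fract (u * y) ∈ I <;>
    simp [Xv, S, Set.indicator_apply, h]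

lemma measurableSet_S {I : Set ℝ} (hI : MeasurableSet I) (u : ℝ) :
    MeasurableSet (S I u) :=
  (measurable_fract.comp (measurable_const_mul u)) hI

lemma Xv_nonneg (I : Set ℝ) (u y : ℝ) : 0 ≤ Xv I u y := by
  by_cases h : Int.fract (u * y) ∈ I <;> simp [Xv, Set.indicator_apply, h]

lemma Xv_le_one (I : Set ℝ) (u y : ℝ) : Xv I u y ≤ 1 := by
  by_cases h : Int.fract (u * y) ∈ I <;> simp [Xv, Set.indicator_apply, h]

lemma Xv_mul (I J : Set ℝ) (u v y : ℝ) :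
    Xv I u y * Xv J v y
      = (S I u ∩ S J v).indicator (fun _ => (1:ℝ)) y := by
  rw [Xv_eq_indicator, Xv_eq_indicator]
  by_cases h1 : y ∈ S I u <;> by_cases h2 : y ∈ S J v <;>
    simp [Set.indicator_apply, h1, h2]

lemma Xv_periodic {u : ℝ} (hu : u ≠ 0) (I : Set ℝ) :
    Function.Periodic (Xv I u) (1/u) := by
  intro y
  unfold Xv
  rw [mul_add, mul_one_div, div_self hu, Int.fract_add_one]

lemma Xv_intervalIntegrable {I : Set ℝ} (hI : MeasurableSet I) (u a b : ℝ) :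
    IntervalIntegrable (Xv I u) volume a b := by
  have h : Xv I u = (S I u).indicator (fun _ => (1:ℝ)) :=
    funext fun y => Xv_eq_indicator I u y
  rw [intervalIntegrable_iff, h, IntegrableOn,
    integrable_indicator_iff (measurableSet_S hI u)]
  refine integrableOn_const (ne_of_lt ?_)
  rw [Measure.restrict_apply (measurableSet_S hI u)]
  exact lt_of_le_of_lt (measure_mono Set.inter_subset_right) measure_Ioc_lt_top

end CovAux

namespace CovAux

lemma integral_one_period {u p q : ℝ} (hu : 0 < u) (hp : 0 ≤ p) (hpq : p ≤ q)
    (hq : q ≤ 1) (t : ℝ) :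
    ∫ y in t..t + 1/u, Xv (Set.Icc p q) u y = (q - p) / u := by
  rw [(Xv_periodic hu.ne' (Set.Icc p q)).intervalIntegral_add_eq t 0, zero_add]
  unfold Xv
  rw [intervalIntegral.integral_comp_mul_left
    (fun x => (Set.Icc p q).indicator (fun _ => (1:ℝ)) (Int.fract x)) hu.ne']
  rw [mul_zero, mul_one_div, div_self hu.ne']
  have h1 : (∫ x in (0:ℝ)..1, (Set.Icc p q).indicator (fun _ => (1:ℝ)) (Int.fract x))
      = ∫ x in (0:ℝ)..1, (Set.Icc p q).indicator (fun _ => (1:ℝ)) x := by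
    rw [intervalIntegral.integral_of_le zero_le_one,
      intervalIntegral.integral_of_le zero_le_one]
    apply setIntegral_congr_ae measurableSet_Ioc
    have hne : ∀ᵐ x : ℝ, x ≠ 1 := by
      have : volume ({(1:ℝ)} : Set ℝ) = 0 := Real.volume_singleton
      exact (ae_iff.2 (by simpa using this))
    filter_upwards [hne] with x hx hmem
    rw [Int.fract_eq_self.2 ⟨le_of_lt hmem.1, lt_of_le_of_ne hmem.2 hx⟩]
  rw [h1, intervalIntegral.integral_of_le zero_le_one, integral_indicator measurableSet_Icc]
  rw [setIntegral_const, Measure.real, Measure.restrict_apply measurableSet_Icc]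
  have hvol : volume (Set.Icc p q ∩ Set.Ioc 0 1) = ENNReal.ofReal (q - p) := by
    apply le_antisymm
    · calc volume (Set.Icc p q ∩ Set.Ioc 0 1) ≤ volume (Set.Icc p q) :=
            measure_mono Set.inter_subset_left
        _ = ENNReal.ofReal (q - p) := Real.volume_Icc
    · calc ENNReal.ofReal (q - p) = volume (Set.Ioc p q) := Real.volume_Ioc.symm
        _ ≤ volume (Set.Icc p q ∩ Set.Ioc 0 1) := by
            apply measure_mono
            intro x hx
            exact ⟨⟨le_of_lt hx.1, hx.2⟩, ⟨lt_of_le_of_lt hp hx.1, le_trans hx.2 hq⟩⟩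
  rw [hvol, ENNReal.toReal_ofReal (by linarith)]
  simp [smul_eq_mul, div_eq_inv_mul]

lemma integral_k_periods {u p q : ℝ} (hu : 0 < u) (hp : 0 ≤ p) (hpq : p ≤ q)
    (hq : q ≤ 1) (k : ℕ) (t : ℝ) :
    ∫ y in t..t + (k:ℝ) * (1/u), Xv (Set.Icc p q) u y = (k:ℝ) * ((q - p) / u) := by
  have h := (Xv_periodic hu.ne' (Set.Icc p q)).intervalIntegral_add_zsmul_eq (k:ℤ) t
    (fun t₁ t₂ => Xv_intervalIntegrable measurableSet_Icc u t₁ t₂)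
  rw [integral_one_period hu hp hpq hq] at h
  simpa [zsmul_eq_mul] using h

lemma lemA {u p q : ℝ} (hu : 1 ≤ u) (hp : 0 ≤ p) (hpq : p ≤ q) (hq : q ≤ 1)
    {c d : ℝ} (hcd : c ≤ d) :
    |(∫ y in c..d, Xv (Set.Icc p q) u y) - (d - c) * (q - p)| ≤ (q - p) / u := by
  have hu0 : 0 < u := lt_of_lt_of_le one_pos hu
  have hl : 0 ≤ q - p := by linarith
  set k : ℕ := ⌊(d - c) * u⌋₊ with hkdef
  have hk1 : (k:ℝ) ≤ (d - c) * u := Nat.floor_le (mul_nonneg (by linarith) hu0.le)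
  have hk2 : (d - c) * u < (k:ℝ) + 1 := Nat.lt_floor_add_one _
  have hT : (0:ℝ) < 1/u := by positivity
  have hmid1 : c ≤ c + (k:ℝ) * (1/u) := by
    have : (0:ℝ) ≤ (k:ℝ) * (1/u) := by positivity
    linarith
  have hmid2 : c + (k:ℝ) * (1/u) ≤ d := by
    rw [← le_sub_iff_add_le', mul_one_div, div_le_iff₀ hu0]
    linarith
  have hmid3 : d ≤ c + (k:ℝ) * (1/u) + 1/u := by
    have h : d - c ≤ ((k:ℝ) + 1)/u := by rw [le_div_iff₀ hu0]; linarith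
    have h2 : ((k:ℝ)+1)/u = (k:ℝ)*(1/u) + 1/u := by ring
    linarith
  have hint : ∀ a b : ℝ, IntervalIntegrable (Xv (Set.Icc p q) u) volume a b :=
    fun a b => Xv_intervalIntegrable measurableSet_Icc u a b
  have hsplit := intervalIntegral.integral_add_adjacent_intervals
    (hint c (c + (k:ℝ) * (1/u))) (hint (c + (k:ℝ) * (1/u)) d)
  have hfirst : (∫ y in c..c + (k:ℝ) * (1/u), Xv (Set.Icc p q) u y)
      = (k:ℝ) * ((q - p) / u) := integral_k_periods hu0 hp hpq hq k c
  set r : ℝ := ∫ y in c + (k:ℝ) * (1/u)..d, Xv (Set.Icc p q) u y with hrdef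
  have hr1 : 0 ≤ r :=
    intervalIntegral.integral_nonneg hmid2 (fun y _ => Xv_nonneg _ _ _)
  have hr2 : r ≤ (q - p) / u := by
    have hmono := intervalIntegral.integral_mono_interval (le_refl (c + (k:ℝ)*(1/u)))
      hmid2 hmid3 (ae_of_all _ (fun y => Xv_nonneg (Set.Icc p q) u y)) (hint _ _)
    rw [integral_one_period hu0 hp hpq hq] at hmono
    exact hmono
  have key1 : (k:ℝ) * ((q - p) / u) ≤ (d - c) * (q - p) := by
    rw [mul_div_assoc', div_le_iff₀ hu0]; nlinarith
  have key2 : (d - c) * (q - p) ≤ (k:ℝ) * ((q - p) / u) + (q - p) / u := by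
    have h : (k:ℝ) * ((q - p)/u) + (q - p)/u = (((k:ℝ) + 1) * (q - p))/u := by ring
    rw [h, le_div_iff₀ hu0]; nlinarith
  rw [← hsplit, hfirst, abs_le]
  constructor <;> linarith

end CovAux

namespace CovAux

lemma integral_indicator_eq {X : Set ℝ} (hX : MeasurableSet X) {c d : ℝ} (hcd : c ≤ d) :
    (∫ y in c..d, X.indicator (fun _ => (1:ℝ)) y) = (volume (X ∩ Set.Ioc c d)).toReal := by
  rw [intervalIntegral.integral_of_le hcd, integral_indicator hX, setIntegral_const,
    Measure.real, Measure.restrict_apply hX, smul_eq_mul, mul_one]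

lemma vol_inter_Icc_eq_Ioc (X : Set ℝ) (c d : ℝ) :
    volume (X ∩ Set.Icc c d) = volume (X ∩ Set.Ioc c d) := by
  apply le_antisymm
  · have hsub : X ∩ Set.Icc c d ⊆ (X ∩ Set.Ioc c d) ∪ {c} := by
      intro x hx
      by_cases h : x = c
      · exact Or.inr (by simp [h])
      · exact Or.inl ⟨hx.1, lt_of_le_of_ne hx.2.1 (Ne.symm h), hx.2.2⟩
    calc volume (X ∩ Set.Icc c d) ≤ volume ((X ∩ Set.Ioc c d) ∪ {c}) := measure_mono hsub
      _ ≤ volume (X ∩ Set.Ioc c d) + volume ({c} : Set ℝ) := measure_union_le _ _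
      _ = volume (X ∩ Set.Ioc c d) := by rw [Real.volume_singleton, add_zero]
  · exact measure_mono (Set.inter_subset_inter_right X Set.Ioc_subset_Icc_self)

lemma vol_inter_Ioc_eq_Ioo (X : Set ℝ) (c d : ℝ) :
    volume (X ∩ Set.Ioc c d) = volume (X ∩ Set.Ioo c d) := by
  apply le_antisymm
  · have hsub : X ∩ Set.Ioc c d ⊆ (X ∩ Set.Ioo c d) ∪ {d} := by
      intro x hx
      by_cases h : x = d
      · exact Or.inr (by simp [h])
      · exact Or.inl ⟨hx.1, hx.2.1, lt_of_le_of_ne hx.2.2 h⟩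
    calc volume (X ∩ Set.Ioc c d) ≤ volume ((X ∩ Set.Ioo c d) ∪ {d}) := measure_mono hsub
      _ ≤ volume (X ∩ Set.Ioo c d) + volume ({d} : Set ℝ) := measure_union_le _ _
      _ = volume (X ∩ Set.Ioo c d) := by rw [Real.volume_singleton, add_zero]
  · exact measure_mono (Set.inter_subset_inter_right X Set.Ioo_subset_Ioc_self)

lemma lemA_measure {u p q : ℝ} (hu : 1 ≤ u) (hp : 0 ≤ p) (hpq : p ≤ q) (hq : q ≤ 1)
    {c d : ℝ} (hcd : c ≤ d) :
    |(volume (S (Set.Icc p q) u ∩ Set.Ioc c d)).toReal - (d - c) * (q - p)| ≤ (q - p) / u := by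
  have h := lemA hu hp hpq hq hcd
  have heq : (∫ y in c..d, Xv (Set.Icc p q) u y)
      = (volume (S (Set.Icc p q) u ∩ Set.Ioc c d)).toReal := by
    rw [intervalIntegral.integral_congr (fun y _ => Xv_eq_indicator (Set.Icc p q) u y),
      integral_indicator_eq (measurableSet_S measurableSet_Icc u) hcd]
  rwa [heq] at h

lemma final_arith {un um ln lm sn sm E Kr K'r : ℝ}
    (hun : 1 ≤ un) (hum : 1 ≤ um) (hunum : un ≤ um)
    (hln0 : 0 ≤ ln) (hln1 : ln ≤ 1) (hlm0 : 0 ≤ lm)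
    (hK1 : Kr ≤ un + 1)
    (hK'1 : un - 1 ≤ K'r) (hK'2 : K'r ≤ un)
    (hEu : E ≤ Kr * (ln * lm / un + lm / um))
    (hEl : K'r * (ln * lm / un - lm / um) ≤ E)
    (hsn : |sn - ln| ≤ ln / un) (hsm : |sm - lm| ≤ lm / um) (hsm0 : 0 ≤ sm) :
    |E - sn * sm| ≤ 4 * lm * (un / um + 1 / un) := by
  have hun0 : (0:ℝ) < un := lt_of_lt_of_le one_pos hun
  have hum0 : (0:ℝ) < um := lt_of_lt_of_le one_pos hum
  set A := ln * lm / un with hA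
  set B := lm / um with hB
  set D := lm / un with hD
  have hA0 : 0 ≤ A := by positivity
  have hB0 : 0 ≤ B := by positivity
  have hD0 : 0 ≤ D := by positivity
  have hAD : A ≤ D := by
    rw [hA, hD]
    gcongr
    nlinarith
  have hBD : B ≤ D := by
    rw [hB, hD]
    gcongr
  have hunA : un * A = ln * lm := by rw [hA]; field_simp
  have hup : E ≤ ln * lm + D + 2 * (un * B) := by
    have h1 : Kr * (A + B) ≤ (un + 1) * (A + B) :=
      mul_le_mul_of_nonneg_right hK1 (by positivity)
    nlinarith [hEu, hunA, hAD, hA0, hB0,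
      mul_nonneg (show (0:ℝ) ≤ un - 1 by linarith) hB0]
  have hlo : ln * lm - D - 2 * (un * B) ≤ E := by
    rcases le_or_gt 0 (A - B) with hx | hx
    · have h2 : (un - 1) * (A - B) ≤ K'r * (A - B) :=
        mul_le_mul_of_nonneg_right hK'1 hx
      nlinarith [hEl, hunA, hAD, hB0, hD0, mul_nonneg hun0.le hB0]
    · have h2 : un * (A - B) ≤ K'r * (A - B) :=
        mul_le_mul_of_nonpos_right hK'2 hx.le
      nlinarith [hEl, hunA, hD0, mul_nonneg hun0.le hB0]
  have hBlm : B ≤ lm := by rw [hB]; exact div_le_self hlm0 hum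
  have hsm2 : sm ≤ 2 * lm := by
    have h := (abs_le.1 hsm).2
    linarith
  have hident : sn * sm - ln * lm = (sn - ln) * sm + ln * (sm - lm) := by ring
  have habs : |sn * sm - ln * lm| ≤ |sn - ln| * sm + ln * |sm - lm| := by
    rw [hident]
    refine (abs_add_le _ _).trans ?_
    rw [abs_mul, abs_mul, abs_of_nonneg hsm0, abs_of_nonneg hln0]
  have hterm1 : |sn - ln| * sm ≤ 2 * D := by
    have h1 : |sn - ln| * sm ≤ (ln / un) * (2 * lm) :=
      mul_le_mul hsn hsm2 hsm0 (by positivity)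
    have h2 : (ln / un) * (2 * lm) = 2 * A := by rw [hA]; ring
    linarith
  have hterm2 : ln * |sm - lm| ≤ D := by
    have h1 : ln * |sm - lm| ≤ 1 * (lm / um) :=
      mul_le_mul hln1 hsm (abs_nonneg _) zero_le_one
    have h2 : (1:ℝ) * (lm / um) = B := by rw [hB]; ring
    linarith
  have h3 : |sn * sm - ln * lm| ≤ 3 * D := by linarith
  have hEabs : |E - ln * lm| ≤ D + 2 * (un * B) := abs_le.2 ⟨by linarith, by linarith⟩
  have hgoal : 4 * lm * (un / um + 1 / un) = 4 * D + 4 * (un * B) := by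
    rw [hB, hD]; ring
  have htri : |E - sn * sm| ≤ |E - ln * lm| + |sn * sm - ln * lm| := by
    have : E - sn * sm = (E - ln * lm) - (sn * sm - ln * lm) := by ring
    rw [this]
    exact abs_sub _ _
  have hfin : 0 ≤ un * B := mul_nonneg hun0.le hB0
  linarith

end CovAux

namespace CovAux

lemma fract_eq {x : ℝ} {k : ℕ} (h1 : (k:ℝ) ≤ x) (h2 : x < (k:ℝ) + 1) :
    Int.fract x = x - (k:ℝ) := by
  have hfl : ⌊x⌋ = (k:ℤ) := Int.floor_eq_iff.2 ⟨by exact_mod_cast h1, by push_cast; exact h2⟩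
  rw [← Int.self_sub_floor, hfl]
  push_cast
  ring

lemma mem_upper {un p q y : ℝ} (hun : 1 ≤ un) (hy0 : 0 < y) (hy1 : y ≤ 1)
    (hyn : y ∈ S (Set.Icc p q) un) :
    ∃ k : ℕ, k < ⌊un⌋₊ + 1 ∧ y ∈ Set.Icc (((k:ℝ) + p)/un) (((k:ℝ) + q)/un) := by
  have hun0 : (0:ℝ) < un := lt_of_lt_of_le one_pos hun
  have hx0 : (0:ℝ) ≤ un * y := by positivity
  have hk1 : ((⌊un * y⌋₊ : ℕ):ℝ) ≤ un * y := Nat.floor_le hx0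
  have hk2 : un * y < ((⌊un * y⌋₊ : ℕ):ℝ) + 1 := Nat.lt_floor_add_one _
  have hmem : Int.fract (un * y) ∈ Set.Icc p q := hyn
  rw [Set.mem_Icc, fract_eq hk1 hk2] at hmem
  refine ⟨⌊un * y⌋₊, ?_, ?_, ?_⟩
  · have h : ⌊un * y⌋₊ ≤ ⌊un⌋₊ := Nat.floor_le_floor (by nlinarith)
    omega
  · rw [div_le_iff₀ hun0]
    nlinarith [hmem.1]
  · rw [le_div_iff₀ hun0]
    nlinarith [hmem.2]

lemma mem_lower {un p q y : ℝ} (hun : 1 ≤ un) (hp : 0 ≤ p) (hpq : p ≤ q) (hq : q ≤ 1)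
    {k : ℕ} (hk : k < ⌊un⌋₊)
    (hy : y ∈ Set.Ioo (((k:ℝ) + p)/un) (((k:ℝ) + q)/un)) :
    y ∈ S (Set.Icc p q) un ∩ Set.Ioc 0 1 := by
  have hun0 : (0:ℝ) < un := lt_of_lt_of_le one_pos hun
  obtain ⟨hya, hyb⟩ := hy
  have h1 : (k:ℝ) + p < un * y := by
    rw [div_lt_iff₀ hun0] at hya
    nlinarith
  have h2 : un * y < (k:ℝ) + q := by
    rw [lt_div_iff₀ hun0] at hyb
    nlinarith
  have hK : (k:ℝ) + 1 ≤ un := by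
    have hc : ((k + 1 : ℕ):ℝ) ≤ ((⌊un⌋₊ : ℕ):ℝ) := by exact_mod_cast Nat.succ_le_of_lt hk
    have hfl : ((⌊un⌋₊ : ℕ):ℝ) ≤ un := Nat.floor_le hun0.le
    push_cast at hc
    linarith
  have hfr : Int.fract (un * y) = un * y - (k:ℝ) := fract_eq (by linarith) (by linarith)
  refine ⟨?_, ?_, ?_⟩
  · show Int.fract (un * y) ∈ Set.Icc p q
    rw [hfr]
    exact ⟨by linarith, by linarith⟩
  · have h0 : (0:ℝ) ≤ ((k:ℝ) + p)/un := by positivity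
    linarith
  · nlinarith

end CovAux

open CovAux

/-- covariance bound `|Cov(X_n, X_m)| ≤ C m^{-a}(u_n/u_m + 1/u_n)`
for `n < m`, where expectations are over Lebesgue measure on `[0,1]`. -/
theorem covariance_bound (a : ℝ) (ha : a ∈ Set.Ioo (0:ℝ) 1)
    (u : ℕ → ℝ) (humono : StrictMono u) (hu1 : 1 ≤ u 1)
    (I : ℕ → Set ℝ) (hIsub : ∀ n, I n ⊆ Set.Icc (0:ℝ) 1)
    (hIint : ∀ n : ℕ, 1 ≤ n → ∃ p q : ℝ, I n = Set.Icc p q)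
    (hIvol : ∀ n : ℕ, 1 ≤ n → volume (I n) = ENNReal.ofReal ((n:ℝ) ^ (-a))) :
    ∃ C : ℝ, 0 < C ∧ ∀ n m : ℕ, 1 ≤ n → n < m →
      |(∫ y in Set.Icc (0:ℝ) 1, Xv (I n) (u n) y * Xv (I m) (u m) y) -
        (∫ y in Set.Icc (0:ℝ) 1, Xv (I n) (u n) y) *
        (∫ y in Set.Icc (0:ℝ) 1, Xv (I m) (u m) y)|
      ≤ C * (m:ℝ) ^ (-a) * (u n / u m + 1 / u n) := by
  classical
  refine ⟨4, by norm_num, fun n m hn hnm => ?_⟩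
  have hm : 1 ≤ m := le_trans hn hnm.le
  have hun : 1 ≤ u n := le_trans hu1 (humono.monotone hn)
  have hum : 1 ≤ u m := le_trans hu1 (humono.monotone hm)
  have hunum : u n ≤ u m := (humono hnm).le
  have hun0 : (0:ℝ) < u n := lt_of_lt_of_le one_pos hun
  have hum0 : (0:ℝ) < u m := lt_of_lt_of_le one_pos hum
  obtain ⟨p, q, hIn⟩ := hIint n hn
  obtain ⟨p', q', hIm⟩ := hIint m hm
  have hna : (0:ℝ) < (n:ℝ) ^ (-a) :=
    Real.rpow_pos_of_pos (by exact_mod_cast Nat.lt_of_lt_of_le Nat.zero_lt_one hn) _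
  have hma : (0:ℝ) < (m:ℝ) ^ (-a) :=
    Real.rpow_pos_of_pos (by exact_mod_cast Nat.lt_of_lt_of_le Nat.zero_lt_one hm) _
  -- interval endpoints facts for n
  have hpq : p ≤ q := by
    by_contra h
    have h0 : volume (I n) = 0 := by rw [hIn, Set.Icc_eq_empty h, measure_empty]
    rw [hIvol n hn, ENNReal.ofReal_eq_zero] at h0
    linarith
  have hlen : q - p = (n:ℝ) ^ (-a) := by
    have h := hIvol n hn
    rw [hIn, Real.volume_Icc] at h
    exact (ENNReal.ofReal_eq_ofReal_iff (by linarith) hna.le).1 h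
  have hp0 : 0 ≤ p := by
    have : p ∈ I n := by rw [hIn]; exact Set.left_mem_Icc.2 hpq
    exact (hIsub n this).1
  have hq1 : q ≤ 1 := by
    have : q ∈ I n := by rw [hIn]; exact Set.right_mem_Icc.2 hpq
    exact (hIsub n this).2
  -- interval endpoints facts for m
  have hpq' : p' ≤ q' := by
    by_contra h
    have h0 : volume (I m) = 0 := by rw [hIm, Set.Icc_eq_empty h, measure_empty]
    rw [hIvol m hm, ENNReal.ofReal_eq_zero] at h0
    linarith
  have hlen' : q' - p' = (m:ℝ) ^ (-a) := by
    have h := hIvol m hm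
    rw [hIm, Real.volume_Icc] at h
    exact (ENNReal.ofReal_eq_ofReal_iff (by linarith) hma.le).1 h
  have hp0' : 0 ≤ p' := by
    have : p' ∈ I m := by rw [hIm]; exact Set.left_mem_Icc.2 hpq'
    exact (hIsub m this).1
  have hq1' : q' ≤ 1 := by
    have : q' ∈ I m := by rw [hIm]; exact Set.right_mem_Icc.2 hpq'
    exact (hIsub m this).2
  rw [hIn, hIm, ← hlen']
  set Sn := S (Set.Icc p q) (u n) with hSn
  set Sm := S (Set.Icc p' q') (u m) with hSm
  have hmeasn : MeasurableSet Sn := measurableSet_S measurableSet_Icc _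
  have hmeasm : MeasurableSet Sm := measurableSet_S measurableSet_Icc _
  -- expectation conversions
  have hE : (∫ y in Set.Icc (0:ℝ) 1, Xv (Set.Icc p q) (u n) y * Xv (Set.Icc p' q') (u m) y)
      = (volume (Sn ∩ Sm ∩ Set.Ioc 0 1)).toReal := by
    simp only [Xv_mul]
    rw [integral_Icc_eq_integral_Ioc, ← hSn, ← hSm,
      integral_indicator (hmeasn.inter hmeasm), setIntegral_const,
      Measure.real, Measure.restrict_apply (hmeasn.inter hmeasm), smul_eq_mul, mul_one]
  have hσn_eq : (∫ y in Set.Icc (0:ℝ) 1, Xv (Set.Icc p q) (u n) y)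
      = ∫ y in (0:ℝ)..1, Xv (Set.Icc p q) (u n) y := by
    rw [integral_Icc_eq_integral_Ioc, ← intervalIntegral.integral_of_le zero_le_one]
  have hσm_eq : (∫ y in Set.Icc (0:ℝ) 1, Xv (Set.Icc p' q') (u m) y)
      = ∫ y in (0:ℝ)..1, Xv (Set.Icc p' q') (u m) y := by
    rw [integral_Icc_eq_integral_Ioc, ← intervalIntegral.integral_of_le zero_le_one]
  have hσn_bd : |(∫ y in Set.Icc (0:ℝ) 1, Xv (Set.Icc p q) (u n) y) - (q - p)|
      ≤ (q - p) / u n := by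
    rw [hσn_eq]
    have h := lemA hun hp0 hpq hq1 (zero_le_one (α := ℝ))
    simpa using h
  have hσm_bd : |(∫ y in Set.Icc (0:ℝ) 1, Xv (Set.Icc p' q') (u m) y) - (q' - p')|
      ≤ (q' - p') / u m := by
    rw [hσm_eq]
    have h := lemA hum hp0' hpq' hq1' (zero_le_one (α := ℝ))
    simpa using h
  have hσm0 : 0 ≤ ∫ y in Set.Icc (0:ℝ) 1, Xv (Set.Icc p' q') (u m) y :=
    setIntegral_nonneg measurableSet_Icc (fun y _ => Xv_nonneg _ _ _)
  -- the interval decomposition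
  set K' : ℕ := ⌊u n⌋₊ with hK'def
  set K : ℕ := ⌊u n⌋₊ + 1 with hKdef
  set aa : ℕ → ℝ := fun k => ((k:ℝ) + p) / u n with haa
  set bb : ℕ → ℝ := fun k => ((k:ℝ) + q) / u n with hbb
  have hab : ∀ k : ℕ, aa k ≤ bb k := fun k => by
    simp only [haa, hbb]
    gcongr
  set v : ℕ → ℝ := fun k => (volume (Sm ∩ Set.Ioc (aa k) (bb k))).toReal with hv
  have hvk : ∀ k : ℕ, |v k - (q - p) * (q' - p') / u n| ≤ (q' - p') / u m := by
    intro k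
    have h := lemA_measure hum hp0' hpq' hq1' (hab k)
    have hd : (bb k - aa k) * (q' - p') = (q - p) * (q' - p') / u n := by
      rw [haa, hbb]; ring
    rw [hd] at h
    exact h
  have hfin_k : ∀ k : ℕ, volume (Sm ∩ Set.Ioc (aa k) (bb k)) ≠ ⊤ :=
    fun k => (lt_of_le_of_lt (measure_mono Set.inter_subset_right) measure_Ioc_lt_top).ne
  have hEfin : volume (Sn ∩ Sm ∩ Set.Ioc 0 1) ≠ ⊤ :=
    (lt_of_le_of_lt (measure_mono Set.inter_subset_right) measure_Ioc_lt_top).ne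
  -- upper bound
  have hsub_up : Sn ∩ Sm ∩ Set.Ioc 0 1 ⊆
      ⋃ k ∈ Finset.range K, (Sm ∩ Set.Icc (aa k) (bb k)) := by
    rintro y ⟨⟨hyn, hym⟩, hy0, hy1⟩
    obtain ⟨k, hkK, hmem⟩ := mem_upper hun hy0 hy1 hyn
    exact Set.mem_biUnion (Finset.mem_range.2 hkK) ⟨hym, hmem⟩
  have hup_meas : volume (Sn ∩ Sm ∩ Set.Ioc 0 1)
      ≤ ∑ k ∈ Finset.range K, volume (Sm ∩ Set.Ioc (aa k) (bb k)) := by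
    refine (measure_mono hsub_up).trans ?_
    refine (measure_biUnion_finset_le _ _).trans ?_
    refine Finset.sum_le_sum fun k _ => ?_
    rw [vol_inter_Icc_eq_Ioc]
  have hEr_ub : (volume (Sn ∩ Sm ∩ Set.Ioc 0 1)).toReal ≤ ∑ k ∈ Finset.range K, v k := by
    have h1 := ENNReal.toReal_mono
      (ENNReal.sum_lt_top.2 fun k _ => (hfin_k k).lt_top).ne hup_meas
    rwa [ENNReal.toReal_sum (fun k _ => hfin_k k)] at h1
  have hEu : (volume (Sn ∩ Sm ∩ Set.Ioc 0 1)).toReal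
      ≤ (K:ℝ) * ((q - p) * (q' - p') / u n + (q' - p') / u m) := by
    refine hEr_ub.trans ?_
    have h1 : ∑ k ∈ Finset.range K, v k
        ≤ ∑ _k ∈ Finset.range K, ((q - p) * (q' - p') / u n + (q' - p') / u m) := by
      refine Finset.sum_le_sum fun k _ => ?_
      have := (abs_le.1 (hvk k)).2
      linarith
    rwa [Finset.sum_const, Finset.card_range, nsmul_eq_mul] at h1
  -- lower bound
  have hdisj : (↑(Finset.range K') : Set ℕ).PairwiseDisjoint
      (fun k => Sm ∩ Set.Ioo (aa k) (bb k)) := by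
    have key : ∀ i j : ℕ, i < j →
        Disjoint (Sm ∩ Set.Ioo (aa i) (bb i)) (Sm ∩ Set.Ioo (aa j) (bb j)) := by
      intro i j hij
      have hij' : (i:ℝ) + 1 ≤ (j:ℝ) := by exact_mod_cast hij
      have hle : bb i ≤ aa j := by
        simp only [haa, hbb]
        rw [div_le_div_iff₀ hun0 hun0]
        nlinarith
      refine Set.disjoint_left.2 ?_
      rintro y ⟨_, hy1⟩ ⟨_, hy2⟩
      exact absurd (hy1.2.trans_le (hle.trans hy2.1.le)) (lt_irrefl y)
    intro i _ j _ hij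
    rcases hij.lt_or_gt with h | h
    · exact key i j h
    · exact (key j i h).symm
  have hlo_meas : ∑ k ∈ Finset.range K', volume (Sm ∩ Set.Ioc (aa k) (bb k))
      ≤ volume (Sn ∩ Sm ∩ Set.Ioc 0 1) := by
    have heq : ∑ k ∈ Finset.range K', volume (Sm ∩ Set.Ioc (aa k) (bb k))
        = volume (⋃ k ∈ Finset.range K', (Sm ∩ Set.Ioo (aa k) (bb k))) := by
      rw [measure_biUnion_finset hdisj (fun k _ => hmeasm.inter measurableSet_Ioo)]
      exact Finset.sum_congr rfl fun k _ => vol_inter_Ioc_eq_Ioo _ _ _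
    rw [heq]
    refine measure_mono (Set.iUnion₂_subset fun k hk => ?_)
    rintro y ⟨hym, hy⟩
    have h := mem_lower hun hp0 hpq hq1 (Finset.mem_range.1 hk) hy
    exact ⟨⟨h.1, hym⟩, h.2⟩
  have hEr_lb : ∑ k ∈ Finset.range K', v k ≤ (volume (Sn ∩ Sm ∩ Set.Ioc 0 1)).toReal := by
    have h1 := ENNReal.toReal_mono hEfin hlo_meas
    rwa [ENNReal.toReal_sum (fun k _ => hfin_k k)] at h1
  have hEl : (K':ℝ) * ((q - p) * (q' - p') / u n - (q' - p') / u m)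
      ≤ (volume (Sn ∩ Sm ∩ Set.Ioc 0 1)).toReal := by
    refine le_trans ?_ hEr_lb
    have h1 : ∑ _k ∈ Finset.range K', ((q - p) * (q' - p') / u n - (q' - p') / u m)
        ≤ ∑ k ∈ Finset.range K', v k := by
      refine Finset.sum_le_sum fun k _ => ?_
      have := (abs_le.1 (hvk k)).1
      linarith
    rwa [Finset.sum_const, Finset.card_range, nsmul_eq_mul] at h1
  -- floor bounds
  have hfl1 : ((K:ℕ):ℝ) ≤ u n + 1 := by
    rw [hKdef]
    push_cast
    have := Nat.floor_le hun0.le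
    linarith
  have hfl2 : u n - 1 ≤ ((K':ℕ):ℝ) := by
    have := Nat.lt_floor_add_one (u n)
    rw [hK'def]
    linarith
  have hfl3 : ((K':ℕ):ℝ) ≤ u n := Nat.floor_le hun0.le
  -- conclude
  rw [hE]
  exact final_arith hun hum hunum (by linarith) (by linarith) (by linarith)
    hfl1 hfl2 hfl3 hEu hEl hσn_bd hσm_bd hσm0
end

section
/- Let A ⊆ ℕ and a ∈ (0,1), and set γ̄ = max{0, dim̄_M(A) − a}, where dim̄_M(A) = limsup_{N→∞} log|A ∩ [1,N]| / log N is the upper mass dimension. Then for every γ > γ̄, lim_{N→∞} N^{-γ} ∑_{n=1}^N n^{-a} 1_A(n) = 0, and for every 0 < γ < γ̄, limsup_{N→∞} N^{-γ} ∑_{n=1}^N n^{-a} 1_A(n) = +∞. -/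
open Filter

/-- Upper mass dimension of a set of naturals:
`limsup_N log|A ∩ [1,N]| / log N`. -/
noncomputable def upperMassDim (A : Set ℕ) : ℝ :=
  Filter.limsup (fun N : ℕ => Real.log ((A ∩ Set.Icc 1 N).ncard : ℝ) / Real.log N) atTop

open Classical in
lemma aux_sum_ind (A : Set ℕ) (s : Finset ℕ) :
    (∑ n ∈ s, A.indicator (fun _ => (1:ℝ)) n) = (s.filter (· ∈ A)).card := by
  classical
  rw [← Finset.sum_boole]
  refine Finset.sum_congr rfl fun n _ => ?_
  by_cases h : n ∈ A <;> simp [h]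

open Classical in
lemma aux_ncard (A : Set ℕ) (N : ℕ) :
    (A ∩ Set.Icc 1 N).ncard = ((Finset.Icc 1 N).filter (· ∈ A)).card := by
  classical
  rw [← Set.ncard_coe_finset]
  congr 1
  ext x
  simp [Set.mem_Icc]; tauto

lemma aux_ind_bound (A : Set ℕ) (n : ℕ) : A.indicator (fun _ => (1:ℝ)) n ≤ 1 := by
  classical
  by_cases h : n ∈ A <;> simp [h]

lemma aux_ind_nonneg (A : Set ℕ) (n : ℕ) : 0 ≤ A.indicator (fun _ => (1:ℝ)) n := by
  classical
  by_cases h : n ∈ A <;> simp [h]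

lemma aux_ncard_le (A : Set ℕ) (N : ℕ) : (A ∩ Set.Icc 1 N).ncard ≤ N := by
  calc (A ∩ Set.Icc 1 N).ncard ≤ (Set.Icc 1 N).ncard :=
        Set.ncard_le_ncard Set.inter_subset_right (Set.finite_Icc _ _)
    _ = N := by rw [← Finset.coe_Icc, Set.ncard_coe_finset, Nat.card_Icc]; omega

lemma aux_f_nonneg (A : Set ℕ) (N : ℕ) :
    0 ≤ Real.log ((A ∩ Set.Icc 1 N).ncard : ℝ) / Real.log N := by
  apply div_nonneg
  · rcases Nat.eq_zero_or_pos (A ∩ Set.Icc 1 N).ncard with h | h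
    · simp [h]
    · exact Real.log_natCast_nonneg _
  · rcases Nat.eq_zero_or_pos N with h | h
    · simp [h]
    · exact Real.log_natCast_nonneg _

lemma aux_f_le_one (A : Set ℕ) (N : ℕ) :
    Real.log ((A ∩ Set.Icc 1 N).ncard : ℝ) / Real.log N ≤ 1 := by
  rcases le_or_gt N 1 with h | h
  · interval_cases N
    · simp [Set.Icc_eq_empty_of_lt]
    · have : (A ∩ Set.Icc 1 1).ncard ≤ 1 := aux_ncard_le A 1
      interval_cases h' : (A ∩ Set.Icc 1 1).ncard <;> simp [h']
  · have hN : (0:ℝ) < Real.log N := by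
      apply Real.log_pos; exact_mod_cast h
    rw [div_le_one hN]
    rcases Nat.eq_zero_or_pos (A ∩ Set.Icc 1 N).ncard with h0 | h0
    · simp [h0]; positivity
    · apply Real.log_le_log (by positivity)
      exact_mod_cast aux_ncard_le A N

/-- From `f N < β`, deduce `|A ∩ [1,N]| ≤ N ^ β` (for `N ≥ 2`, `β > 0`). -/
lemma aux_count_upper (A : Set ℕ) (N : ℕ) (hN : 2 ≤ N) (β : ℝ) (hβ : 0 < β)
    (h : Real.log ((A ∩ Set.Icc 1 N).ncard : ℝ) / Real.log N < β) :
    ((A ∩ Set.Icc 1 N).ncard : ℝ) ≤ (N:ℝ) ^ β := by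
  have hlogN : (0:ℝ) < Real.log N := Real.log_pos (by exact_mod_cast hN)
  rcases Nat.eq_zero_or_pos (A ∩ Set.Icc 1 N).ncard with h0 | h0
  · simp only [h0, Nat.cast_zero]; positivity
  · have hpos : (0:ℝ) < ((A ∩ Set.Icc 1 N).ncard : ℝ) := by exact_mod_cast h0
    rw [div_lt_iff₀ hlogN] at h
    exact le_of_lt ((Real.lt_rpow_iff_log_lt hpos (by positivity)).2 h)

/-- From `c < f N`, deduce `N ^ c < |A ∩ [1,N]|` (for `c > 0`). -/
lemma aux_count_lower (A : Set ℕ) (N : ℕ) (c : ℝ) (hc : 0 < c)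
    (h : c < Real.log ((A ∩ Set.Icc 1 N).ncard : ℝ) / Real.log N) :
    (N:ℝ) ^ c < ((A ∩ Set.Icc 1 N).ncard : ℝ) := by
  have hN2 : 2 ≤ N := by
    by_contra hN
    push_neg at hN
    interval_cases N <;> simp_all [Set.Icc_eq_empty_of_lt]
    · linarith
    · have : (A ∩ Set.Icc 1 1).ncard ≤ 1 := by
        calc (A ∩ Set.Icc 1 1).ncard ≤ (Set.Icc 1 1).ncard :=
          Set.ncard_le_ncard Set.inter_subset_right (Set.finite_Icc _ _)
        _ = 1 := by rw [← Finset.coe_Icc, Set.ncard_coe_finset, Nat.card_Icc]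
      interval_cases h' : (A ∩ Set.Icc 1 1).ncard <;> simp_all <;> linarith
  have hlogN : (0:ℝ) < Real.log N := Real.log_pos (by exact_mod_cast hN2)
  have h0 : (A ∩ Set.Icc 1 N).ncard ≠ 0 := by
    intro h0; rw [h0] at h; simp at h; nlinarith [h]
  have hpos : (0:ℝ) < ((A ∩ Set.Icc 1 N).ncard : ℝ) := by positivity
  rw [lt_div_iff₀ hlogN] at h
  exact (Real.rpow_lt_iff_lt_log (by positivity) hpos).2 h

/-- The key recursive (dyadic) bound on the weighted sums. -/
lemma aux_main_induction (A : Set ℕ) (a δ K : ℝ) (ha : 0 < a) (hδ : 0 < δ) (hK : 1 ≤ K)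
    (hcount : ∀ N : ℕ, 1 ≤ N → ((A ∩ Set.Icc 1 N).ncard : ℝ) ≤ K * (N:ℝ) ^ (δ + a)) :
    ∃ D : ℝ, 1 ≤ D ∧ ∀ N : ℕ, 1 ≤ N →
      (∑ n ∈ Finset.Icc 1 N, (n:ℝ) ^ (-a) * A.indicator (fun _ => (1:ℝ)) n) ≤ D * (N:ℝ) ^ δ := by
  classical
  set t : ℝ := 1 - (2:ℝ) ^ (-δ) with ht_def
  have h2δ : (2:ℝ) ^ (-δ) < 1 := Real.rpow_lt_one_of_one_lt_of_neg one_lt_two (by linarith)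
  have h2δ0 : (0:ℝ) < (2:ℝ) ^ (-δ) := by positivity
  have ht : 0 < t := by simp [ht_def]; linarith
  set D : ℝ := K * (2:ℝ) ^ a / t + 1 with hD_def
  have hD1 : 1 ≤ D := by
    have : 0 ≤ K * (2:ℝ) ^ a / t := by positivity
    simp [hD_def]; linarith
  have hDkey : D * (2:ℝ) ^ (-δ) + K * (2:ℝ) ^ a ≤ D := by
    have h1 : K * (2:ℝ) ^ a ≤ D * t := by
      rw [hD_def, add_mul, div_mul_cancel₀ _ (ne_of_gt ht)]
      nlinarith
    nlinarith
  refine ⟨D, hD1, ?_⟩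
  intro N
  induction N using Nat.strong_induction_on with
  | _ N ih =>
    intro hN1
    rcases le_or_gt N 1 with hN | hN
    · -- N = 1
      have hN' : N = 1 := le_antisymm hN hN1
      subst hN'
      simp only [Finset.Icc_self, Finset.sum_singleton, Nat.cast_one, Real.one_rpow, one_mul]
      have := aux_ind_bound A 1
      linarith
    · -- N ≥ 2
      set M : ℕ := N / 2 with hM_def
      have hM1 : 1 ≤ M := Nat.one_le_div_iff (by norm_num) |>.2 hN
      have hMN : M < N := Nat.div_lt_self (by omega) (by norm_num)
      have hNM : (N:ℝ) ≤ 2 * M + 1 := by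
        have : N ≤ 2 * M + 1 := by omega
        exact_mod_cast this
      have hMhalf : (M:ℝ) ≤ (N:ℝ) / 2 := by
        have : 2 * M ≤ N := by omega
        have : (2:ℝ) * M ≤ N := by exact_mod_cast this
        linarith
      have hhalfM : (N:ℝ) / 2 ≤ (M:ℝ) + 1 := by linarith
      have hNpos : (0:ℝ) < N := by positivity
      have hhalfpos : (0:ℝ) < (N:ℝ) / 2 := by linarith
      -- split the sum
      have hicc : ∀ k : ℕ, Finset.Icc 1 k = Finset.Ioc 0 k := fun k => Finset.Icc_add_one_left_eq_Ioc 0 k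
      have hsplit :
          (∑ n ∈ Finset.Icc 1 N, (n:ℝ) ^ (-a) * A.indicator (fun _ => (1:ℝ)) n)
          = (∑ n ∈ Finset.Icc 1 M, (n:ℝ) ^ (-a) * A.indicator (fun _ => (1:ℝ)) n)
            + ∑ n ∈ Finset.Ioc M N, (n:ℝ) ^ (-a) * A.indicator (fun _ => (1:ℝ)) n := by
        rw [hicc, hicc]
        exact (Finset.sum_Ioc_consecutive _ (Nat.zero_le M) (le_of_lt hMN)).symm
      -- tail bound
      set cnt : ℕ := ((Finset.Ioc M N).filter (· ∈ A)).card with hcnt_def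
      have htail1 : (∑ n ∈ Finset.Ioc M N, (n:ℝ) ^ (-a) * A.indicator (fun _ => (1:ℝ)) n)
          ≤ ((M:ℝ) + 1) ^ (-a) * cnt := by
        have : ∀ n ∈ Finset.Ioc M N, (n:ℝ) ^ (-a) * A.indicator (fun _ => (1:ℝ)) n
            ≤ ((M:ℝ) + 1) ^ (-a) * A.indicator (fun _ => (1:ℝ)) n := by
          intro n hn
          rw [Finset.mem_Ioc] at hn
          have hn1 : (M:ℝ) + 1 ≤ (n:ℝ) := by exact_mod_cast hn.1
          have : (n:ℝ) ^ (-a) ≤ ((M:ℝ) + 1) ^ (-a) :=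
            Real.rpow_le_rpow_of_nonpos (by positivity) hn1 (by linarith)
          exact mul_le_mul_of_nonneg_right this (aux_ind_nonneg A n)
        calc (∑ n ∈ Finset.Ioc M N, (n:ℝ) ^ (-a) * A.indicator (fun _ => (1:ℝ)) n)
            ≤ ∑ n ∈ Finset.Ioc M N, ((M:ℝ) + 1) ^ (-a) * A.indicator (fun _ => (1:ℝ)) n :=
              Finset.sum_le_sum this
          _ = ((M:ℝ) + 1) ^ (-a) * ∑ n ∈ Finset.Ioc M N, A.indicator (fun _ => (1:ℝ)) n := by
              rw [Finset.mul_sum]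
          _ = ((M:ℝ) + 1) ^ (-a) * cnt := by rw [aux_sum_ind]
      have hcnt_le : (cnt : ℝ) ≤ K * (N:ℝ) ^ (δ + a) := by
        have hsub : Finset.Ioc M N ⊆ Finset.Icc 1 N := by
          intro x hx
          rw [Finset.mem_Ioc] at hx
          rw [Finset.mem_Icc]
          omega
        have : cnt ≤ ((Finset.Icc 1 N).filter (· ∈ A)).card :=
          Finset.card_le_card (Finset.filter_subset_filter _ hsub)
        have h2 : (cnt:ℝ) ≤ ((A ∩ Set.Icc 1 N).ncard : ℝ) := by
          rw [aux_ncard]; exact_mod_cast this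
        exact le_trans h2 (hcount N (by omega))
      have hrpow_half : ((M:ℝ) + 1) ^ (-a) ≤ ((N:ℝ) / 2) ^ (-a) :=
        Real.rpow_le_rpow_of_nonpos hhalfpos hhalfM (by linarith)
      have hhalf_eq : ((N:ℝ) / 2) ^ (-a) = (2:ℝ) ^ a * (N:ℝ) ^ (-a) := by
        rw [Real.div_rpow (le_of_lt hNpos) (by norm_num), Real.rpow_neg (by norm_num : (0:ℝ) ≤ 2)]
        field_simp
      have htail : (∑ n ∈ Finset.Ioc M N, (n:ℝ) ^ (-a) * A.indicator (fun _ => (1:ℝ)) n)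
          ≤ K * (2:ℝ) ^ a * (N:ℝ) ^ δ := by
        have hc0 : (0:ℝ) ≤ cnt := Nat.cast_nonneg _
        have step1 : ((M:ℝ) + 1) ^ (-a) * cnt ≤ ((N:ℝ)/2) ^ (-a) * (K * (N:ℝ) ^ (δ + a)) := by
          apply mul_le_mul hrpow_half hcnt_le hc0 (by positivity)
        have h4 : (N:ℝ) ^ (-a) * (N:ℝ) ^ (δ + a) = (N:ℝ) ^ δ := by
          rw [← Real.rpow_add hNpos]; norm_num
        have step2 : ((N:ℝ)/2) ^ (-a) * (K * (N:ℝ) ^ (δ + a)) = K * (2:ℝ) ^ a * (N:ℝ) ^ δ := by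
          calc ((N:ℝ)/2) ^ (-a) * (K * (N:ℝ) ^ (δ + a))
              = K * (2:ℝ) ^ a * ((N:ℝ) ^ (-a) * (N:ℝ) ^ (δ + a)) := by rw [hhalf_eq]; ring
            _ = K * (2:ℝ) ^ a * (N:ℝ) ^ δ := by rw [h4]
        linarith
      -- head bound
      have hhead : (∑ n ∈ Finset.Icc 1 M, (n:ℝ) ^ (-a) * A.indicator (fun _ => (1:ℝ)) n)
          ≤ D * (2:ℝ) ^ (-δ) * (N:ℝ) ^ δ := by
        have h1 := ih M hMN hM1
        have h2 : (M:ℝ) ^ δ ≤ ((N:ℝ)/2) ^ δ :=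
          Real.rpow_le_rpow (Nat.cast_nonneg _) hMhalf (le_of_lt hδ)
        have h3 : ((N:ℝ)/2) ^ δ = (2:ℝ) ^ (-δ) * (N:ℝ) ^ δ := by
          rw [Real.div_rpow (le_of_lt hNpos) (by norm_num), Real.rpow_neg (by norm_num : (0:ℝ) ≤ 2)]
          field_simp
        have hD0 : (0:ℝ) ≤ D := by linarith
        calc (∑ n ∈ Finset.Icc 1 M, (n:ℝ) ^ (-a) * A.indicator (fun _ => (1:ℝ)) n)
            ≤ D * (M:ℝ) ^ δ := h1
          _ ≤ D * ((N:ℝ)/2) ^ δ := mul_le_mul_of_nonneg_left h2 hD0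
          _ = D * (2:ℝ) ^ (-δ) * (N:ℝ) ^ δ := by rw [h3]; ring
      rw [hsplit]
      have hNδ : (0:ℝ) ≤ (N:ℝ) ^ δ := by positivity
      calc _ ≤ D * (2:ℝ) ^ (-δ) * (N:ℝ) ^ δ + K * (2:ℝ) ^ a * (N:ℝ) ^ δ := by linarith
        _ = (D * (2:ℝ) ^ (-δ) + K * (2:ℝ) ^ a) * (N:ℝ) ^ δ := by ring
        _ ≤ D * (N:ℝ) ^ δ := mul_le_mul_of_nonneg_right hDkey hNδ

lemma aux_sum_nonneg (A : Set ℕ) (a : ℝ) (N : ℕ) :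
    0 ≤ ∑ n ∈ Finset.Icc 1 N, (n:ℝ) ^ (-a) * A.indicator (fun _ => (1:ℝ)) n := by
  apply Finset.sum_nonneg
  intro n _
  exact mul_nonneg (by positivity) (aux_ind_nonneg A n)

/-- Lower bound: the weighted sum is at least `N^{-a}` times the count. -/
lemma aux_sum_lower (A : Set ℕ) (a : ℝ) (ha : 0 < a) (N : ℕ) (hN : 1 ≤ N) :
    (N:ℝ) ^ (-a) * ((A ∩ Set.Icc 1 N).ncard : ℝ)
      ≤ ∑ n ∈ Finset.Icc 1 N, (n:ℝ) ^ (-a) * A.indicator (fun _ => (1:ℝ)) n := by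
  classical
  have : ∀ n ∈ Finset.Icc 1 N, (N:ℝ) ^ (-a) * A.indicator (fun _ => (1:ℝ)) n
      ≤ (n:ℝ) ^ (-a) * A.indicator (fun _ => (1:ℝ)) n := by
    intro n hn
    rw [Finset.mem_Icc] at hn
    have hn0 : (0:ℝ) < n := by exact_mod_cast hn.1
    have hnN : (n:ℝ) ≤ N := by exact_mod_cast hn.2
    exact mul_le_mul_of_nonneg_right
      (Real.rpow_le_rpow_of_nonpos hn0 hnN (by linarith)) (aux_ind_nonneg A n)
  calc (N:ℝ) ^ (-a) * ((A ∩ Set.Icc 1 N).ncard : ℝ)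
      = (N:ℝ) ^ (-a) * ∑ n ∈ Finset.Icc 1 N, A.indicator (fun _ => (1:ℝ)) n := by
        rw [aux_sum_ind, aux_ncard]
    _ = ∑ n ∈ Finset.Icc 1 N, (N:ℝ) ^ (-a) * A.indicator (fun _ => (1:ℝ)) n := by
        rw [Finset.mul_sum]
    _ ≤ _ := Finset.sum_le_sum this

/-- with `γ̄ = max{0, dim̄_M(A) − a}`, the weighted counting
sums `N^{-γ} ∑_{n≤N} n^{-a} 1_A(n)` tend to `0` for `γ > γ̄` and have
limsup `+∞` for `0 < γ < γ̄`. -/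
theorem weighted_sum_dichotomy (A : Set ℕ) (a : ℝ) (ha : a ∈ Set.Ioo (0:ℝ) 1) :
    (∀ γ : ℝ, max 0 (upperMassDim A - a) < γ →
      Tendsto (fun N : ℕ =>
          (∑ n ∈ Finset.Icc 1 N, (n:ℝ) ^ (-a) * A.indicator (fun _ => (1:ℝ)) n) / (N:ℝ) ^ γ)
        atTop (nhds 0)) ∧
    (∀ γ : ℝ, 0 < γ → γ < max 0 (upperMassDim A - a) →
      ∀ C : ℝ, ∃ᶠ N : ℕ in atTop,
        C ≤ (∑ n ∈ Finset.Icc 1 N, (n:ℝ) ^ (-a) * A.indicator (fun _ => (1:ℝ)) n) / (N:ℝ) ^ γ) := by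
  obtain ⟨ha0, ha1⟩ := ha
  set f : ℕ → ℝ := fun N => Real.log ((A ∩ Set.Icc 1 N).ncard : ℝ) / Real.log N with hf_def
  have hfb : IsBoundedUnder (· ≤ ·) atTop f :=
    isBoundedUnder_of ⟨1, fun N => aux_f_le_one A N⟩
  have hfb' : IsBoundedUnder (· ≥ ·) atTop f :=
    isBoundedUnder_of ⟨0, fun N => aux_f_nonneg A N⟩
  have hd_def : upperMassDim A = limsup f atTop := rfl
  constructor
  · -- Part 1
    intro γ hγ
    have hγ0 : 0 < γ := lt_of_le_of_lt (le_max_left _ _) hγ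
    have hdγ : upperMassDim A - a < γ := lt_of_le_of_lt (le_max_right _ _) hγ
    set δ : ℝ := (γ + max 0 (upperMassDim A - a)) / 2 with hδ_def
    have hδ0 : 0 < δ := by
      have := le_max_left (0:ℝ) (upperMassDim A - a)
      simp only [hδ_def]; linarith
    have hδγ : δ < γ := by simp only [hδ_def]; linarith
    have hδd : upperMassDim A - a < δ := by
      have := le_max_right (0:ℝ) (upperMassDim A - a)
      simp only [hδ_def]; linarith
    have hβd : upperMassDim A < δ + a := by linarith
    have hev : ∀ᶠ N in atTop, f N < δ + a := eventually_lt_of_limsup_lt (hd_def ▸ hβd) hfb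
    rw [eventually_atTop] at hev
    obtain ⟨N₀, hN₀⟩ := hev
    set N₁ : ℕ := max N₀ 2 with hN₁_def
    set K : ℝ := (N₁ : ℝ) with hK_def
    have hK1 : 1 ≤ K := by
      simp only [hK_def, hN₁_def]
      have : (2:ℕ) ≤ max N₀ 2 := le_max_right _ _
      exact_mod_cast le_trans (by norm_num) this
    have hβ0 : 0 < δ + a := by linarith
    have hcount : ∀ N : ℕ, 1 ≤ N → ((A ∩ Set.Icc 1 N).ncard : ℝ) ≤ K * (N:ℝ) ^ (δ + a) := by
      intro N hN1
      have hNrpow1 : 1 ≤ (N:ℝ) ^ (δ + a) :=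
        Real.one_le_rpow (by exact_mod_cast hN1) (le_of_lt hβ0)
      rcases le_or_gt N₁ N with h | h
      · have hN2 : 2 ≤ N := le_trans (le_max_right _ _) h
        have := aux_count_upper A N hN2 (δ + a) hβ0 (hN₀ N (le_trans (le_max_left _ _) h))
        calc ((A ∩ Set.Icc 1 N).ncard : ℝ) ≤ (N:ℝ) ^ (δ + a) := this
          _ = 1 * (N:ℝ) ^ (δ + a) := by ring
          _ ≤ K * (N:ℝ) ^ (δ + a) := by
              apply mul_le_mul_of_nonneg_right hK1 (by positivity)
      · have h1 : ((A ∩ Set.Icc 1 N).ncard : ℝ) ≤ (N:ℝ) := by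
          exact_mod_cast aux_ncard_le A N
        have h2 : (N:ℝ) ≤ K := by
          simp only [hK_def]; exact_mod_cast le_of_lt h
        calc ((A ∩ Set.Icc 1 N).ncard : ℝ) ≤ K := le_trans h1 h2
          _ = K * 1 := by ring
          _ ≤ K * (N:ℝ) ^ (δ + a) := by
              apply mul_le_mul_of_nonneg_left hNrpow1 (by linarith)
    obtain ⟨D, hD1, hD⟩ := aux_main_induction A a δ K ha0 hδ0 hK1 hcount
    apply squeeze_zero' (g := fun N : ℕ => D * (N:ℝ) ^ (δ - γ))
    · exact Eventually.of_forall fun N =>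
        div_nonneg (aux_sum_nonneg A a N) (Real.rpow_nonneg (Nat.cast_nonneg _) _)
    · filter_upwards [eventually_ge_atTop 1] with N hN1
      have hNpos : (0:ℝ) < N := by exact_mod_cast hN1
      have hγpos : (0:ℝ) < (N:ℝ) ^ γ := Real.rpow_pos_of_pos hNpos _
      calc (∑ n ∈ Finset.Icc 1 N, (n:ℝ) ^ (-a) * A.indicator (fun _ => (1:ℝ)) n) / (N:ℝ) ^ γ
          ≤ (D * (N:ℝ) ^ δ) / (N:ℝ) ^ γ := by
            apply div_le_div_of_nonneg_right (hD N hN1) hγpos.le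
        _ = D * (N:ℝ) ^ (δ - γ) := by
            rw [mul_div_assoc, ← Real.rpow_sub hNpos]
    · have h1 : Tendsto (fun x : ℝ => x ^ (δ - γ)) atTop (nhds 0) := by
        have := tendsto_rpow_neg_atTop (y := γ - δ) (by linarith)
        simpa [neg_sub] using this
      have h2 : Tendsto (fun N : ℕ => (N:ℝ) ^ (δ - γ)) atTop (nhds 0) :=
        h1.comp tendsto_natCast_atTop_atTop
      simpa using h2.const_mul D
  · -- Part 2
    intro γ hγ0 hγ C
    have hda : 0 < upperMassDim A - a := by
      by_contra h
      push_neg at h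
      rw [max_eq_left h] at hγ
      linarith
    rw [max_eq_right (le_of_lt hda)] at hγ
    set ε : ℝ := (upperMassDim A - a - γ) / 2 with hε_def
    have hε0 : 0 < ε := by simp only [hε_def]; linarith
    set c : ℝ := γ + a + ε with hc_def
    have hc0 : 0 < c := by simp only [hc_def]; linarith
    have hcd : c < upperMassDim A := by simp only [hc_def, hε_def]; linarith
    have hfreq : ∃ᶠ N in atTop, c < f N :=
      frequently_lt_of_lt_limsup (hfb'.isCoboundedUnder_le) (hd_def ▸ hcd)
    have hevC : ∀ᶠ N : ℕ in atTop, C ≤ (N:ℝ) ^ ε ∧ 1 ≤ N := by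
      have h1 : Tendsto (fun N : ℕ => (N:ℝ) ^ ε) atTop atTop :=
        (tendsto_rpow_atTop hε0).comp tendsto_natCast_atTop_atTop
      exact (h1.eventually_ge_atTop C).and (eventually_ge_atTop 1)
    refine (hfreq.and_eventually hevC).mono ?_
    rintro N ⟨hcf, hCε, hN1⟩
    have hNpos : (0:ℝ) < N := by exact_mod_cast hN1
    have hcard : (N:ℝ) ^ c < ((A ∩ Set.Icc 1 N).ncard : ℝ) := aux_count_lower A N c hc0 hcf
    have hlow := aux_sum_lower A a ha0 N hN1
    have hγpos : (0:ℝ) < (N:ℝ) ^ γ := Real.rpow_pos_of_pos hNpos _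
    have hra : (0:ℝ) < (N:ℝ) ^ (-a) := Real.rpow_pos_of_pos hNpos _
    have key : (N:ℝ) ^ ε ≤
        (∑ n ∈ Finset.Icc 1 N, (n:ℝ) ^ (-a) * A.indicator (fun _ => (1:ℝ)) n) / (N:ℝ) ^ γ := by
      have h1 : (N:ℝ) ^ (-a) * (N:ℝ) ^ c ≤ (N:ℝ) ^ (-a) * ((A ∩ Set.Icc 1 N).ncard : ℝ) :=
        mul_le_mul_of_nonneg_left (le_of_lt hcard) (le_of_lt hra)
      have h2 : (N:ℝ) ^ (-a) * (N:ℝ) ^ c / (N:ℝ) ^ γ = (N:ℝ) ^ ε := by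
        rw [← Real.rpow_add hNpos, ← Real.rpow_sub hNpos]
        congr 1
        simp only [hc_def]
        ring
      rw [← h2]
      apply div_le_div_of_nonneg_right _ hγpos.le
      exact le_trans h1 hlow
    exact le_trans hCε key
end

section
/- Let A ⊆ ℕ and a ∈ (0,1), and suppose the mass dimension dim_M(A) = lim_{N→∞} log|A ∩ [1,N]| / log N exists. Set γ̄ = max{0, dim_M(A) − a}. Then for 0 < γ < γ̄, lim_{N→∞} N^{-γ} ∑_{n=1}^N n^{-a} 1_A(n) = +∞ (the limit, not just the limsup, diverges to infinity). -/
open Filter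

/-- if the mass dimension of `A` exists (the limit
`D = lim_N log|A ∩ [1,N]|/log N`), then for `0 < γ < max{0, D − a}`, the sums
`N^{-γ} ∑_{n≤N} n^{-a} 1_A(n)` diverge to `+∞` (as a limit). -/
theorem weighted_sum_diverges (A : Set ℕ) (a : ℝ) (ha : a ∈ Set.Ioo (0:ℝ) 1)
    (D : ℝ)
    (hD : Tendsto (fun N : ℕ => Real.log ((A ∩ Set.Icc 1 N).ncard : ℝ) / Real.log N)
      atTop (nhds D)) :
    ∀ γ : ℝ, 0 < γ → γ < max 0 (D - a) →
      Tendsto (fun N : ℕ =>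
          (∑ n ∈ Finset.Icc 1 N, (n:ℝ) ^ (-a) * A.indicator (fun _ => (1:ℝ)) n) / (N:ℝ) ^ γ)
        atTop atTop := by
  classical
  intro γ hγ0 hγ
  have hγD : γ < D - a := by
    rcases lt_max_iff.mp hγ with h | h
    · linarith
    · exact h
  set ε := (D - a - γ) / 2 with hεdef
  have hε0 : 0 < ε := by simp only [hεdef]; linarith
  have hlt : γ + a + ε < D := by simp only [hεdef]; linarith
  have hev : ∀ᶠ N : ℕ in atTop, (N:ℝ) ^ ε ≤
      (∑ n ∈ Finset.Icc 1 N, (n:ℝ) ^ (-a) * A.indicator (fun _ => (1:ℝ)) n) / (N:ℝ) ^ γ := by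
    have h1 : ∀ᶠ N : ℕ in atTop,
        γ + a + ε < Real.log ((A ∩ Set.Icc 1 N).ncard : ℝ) / Real.log N :=
      hD.eventually (eventually_gt_nhds hlt)
    filter_upwards [h1, eventually_ge_atTop 2] with N hN1 hN2
    have hN1R : (1:ℝ) < (N:ℝ) := by exact_mod_cast (by omega : 1 < N)
    have hN0 : (0:ℝ) < (N:ℝ) := by linarith
    have hlogN : 0 < Real.log N := Real.log_pos hN1R
    set c : ℝ := ((A ∩ Set.Icc 1 N).ncard : ℝ) with hcdef
    have hc0 : 0 < c := by
      rcases Nat.eq_zero_or_pos (A ∩ Set.Icc 1 N).ncard with h | h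
      · exfalso
        rw [hcdef, h] at hN1
        simp at hN1
        have : 0 < γ + a + ε := by have := ha.1; linarith
        linarith
      · rw [hcdef]; exact_mod_cast h
    -- lower bound on the counting function
    have hcard : (N:ℝ) ^ (γ + a + ε) ≤ c := by
      have h2 : (γ + a + ε) * Real.log N ≤ Real.log c :=
        (le_div_iff₀ hlogN).mp hN1.le
      calc (N:ℝ) ^ (γ + a + ε) = Real.exp (Real.log N * (γ + a + ε)) := by
            rw [Real.rpow_def_of_pos hN0]
        _ ≤ Real.exp (Real.log c) := Real.exp_le_exp.mpr (by linarith [h2, mul_comm (Real.log (N:ℝ)) (γ + a + ε)])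
        _ = c := Real.exp_log hc0
    -- rewrite ncard as a Finset card
    have hc_eq : (A ∩ Set.Icc 1 N).ncard = ((Finset.Icc 1 N).filter (· ∈ A)).card := by
      rw [← Set.ncard_coe_finset]
      congr 1
      ext n
      simp only [Finset.coe_filter, Finset.mem_Icc, Set.mem_inter_iff, Set.mem_Icc,
        Set.mem_setOf_eq]
      tauto
    -- lower bound on the sum
    have hsum : c * (N:ℝ) ^ (-a) ≤
        ∑ n ∈ Finset.Icc 1 N, (n:ℝ) ^ (-a) * A.indicator (fun _ => (1:ℝ)) n := by
      have hstep : c * (N:ℝ) ^ (-a)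
          = ∑ _n ∈ (Finset.Icc 1 N).filter (· ∈ A), (N:ℝ) ^ (-a) := by
        rw [Finset.sum_const, nsmul_eq_mul, hcdef, hc_eq]
      rw [hstep]
      calc ∑ _n ∈ (Finset.Icc 1 N).filter (· ∈ A), (N:ℝ) ^ (-a)
          ≤ ∑ n ∈ (Finset.Icc 1 N).filter (· ∈ A),
              (n:ℝ) ^ (-a) * A.indicator (fun _ => (1:ℝ)) n := by
            apply Finset.sum_le_sum
            intro n hn
            simp only [Finset.mem_filter, Finset.mem_Icc] at hn
            rw [Set.indicator_of_mem hn.2, mul_one]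
            have hn1 : (1:ℝ) ≤ (n:ℝ) := by exact_mod_cast hn.1.1
            have hnN : (n:ℝ) ≤ (N:ℝ) := by exact_mod_cast hn.1.2
            have hna : 0 < (n:ℝ) ^ a := Real.rpow_pos_of_pos (by linarith) a
            rw [Real.rpow_neg (x := (n:ℝ)) (by linarith), Real.rpow_neg hN0.le]
            exact inv_anti₀ hna (Real.rpow_le_rpow (by linarith) hnN ha.1.le)
        _ ≤ ∑ n ∈ Finset.Icc 1 N, (n:ℝ) ^ (-a) * A.indicator (fun _ => (1:ℝ)) n := by
            apply Finset.sum_le_sum_of_subset_of_nonneg (Finset.filter_subset _ _)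
            intro n hn _
            exact mul_nonneg (Real.rpow_nonneg (Nat.cast_nonneg n) _)
              (Set.indicator_nonneg (fun _ _ => zero_le_one) n)
    have hγpos : (0:ℝ) < (N:ℝ) ^ γ := Real.rpow_pos_of_pos hN0 γ
    calc (N:ℝ) ^ ε = (N:ℝ) ^ (γ + a + ε) * (N:ℝ) ^ (-a) / (N:ℝ) ^ γ := by
          rw [← Real.rpow_add hN0, ← Real.rpow_sub hN0]
          congr 1
          ring
      _ ≤ c * (N:ℝ) ^ (-a) / (N:ℝ) ^ γ := by
          gcongr
      _ ≤ (∑ n ∈ Finset.Icc 1 N, (n:ℝ) ^ (-a) * A.indicator (fun _ => (1:ℝ)) n) / (N:ℝ) ^ γ := by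
          gcongr
  exact tendsto_atTop_mono' atTop hev
    ((tendsto_rpow_atTop hε0).comp tendsto_natCast_atTop_atTop)
end

section
/- Let a ∈ (0,1), let (u_n) be a lacunary sequence of positive reals (u_{n+1}/u_n ≥ ρ for some ρ > 1) with u_1 ≥ 1, and (I_n) intervals in [0,1] with λ(I_n) = n^{-a}. Define Λ_y = {n ∈ ℕ : frac(u_n y) ∈ I_n}. If A ⊆ ℕ satisfies dim̄_M(A) < a, then for Lebesgue almost every y ∈ [0,1], the mass dimension of A ∩ Λ_y exists and equals 0. -/
open MeasureTheory Filter

section Aux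

open scoped Classical ENNReal

lemma meas_frac_le (c : ℝ) (hc : 1 ≤ c) (p q : ℝ) :
    volume (Set.Icc (0:ℝ) 1 ∩ {y | Int.fract (c * y) ∈ Set.Icc p q})
      ≤ 2 * ENNReal.ofReal (q - p) := by
  have hc0 : (0:ℝ) < c := lt_of_lt_of_le one_pos hc
  rcases lt_or_ge q p with hqp | hpq
  · have : Set.Icc p q = ∅ := Set.Icc_eq_empty (not_le.mpr hqp)
    simp [this]
  set K := ⌊c⌋.toNat with hK
  have hsub : Set.Icc (0:ℝ) 1 ∩ {y | Int.fract (c * y) ∈ Set.Icc p q}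
      ⊆ ⋃ k ∈ Finset.range (K+1), Set.Icc ((p+k)/c) ((q+k)/c) := by
    rintro y ⟨⟨hy0, hy1⟩, hfr⟩
    have h0 : (0:ℝ) ≤ c * y := mul_nonneg hc0.le hy0
    have h1 : c * y ≤ c := by nlinarith
    set k0 := ⌊c * y⌋ with hk0
    have hk0nn : 0 ≤ k0 := Int.floor_nonneg.mpr h0
    have hk0le : k0 ≤ ⌊c⌋ := Int.floor_le_floor h1
    have hmem : k0.toNat ∈ Finset.range (K+1) := by
      simp only [Finset.mem_range, Nat.lt_succ_iff, hK]
      exact Int.toNat_le_toNat hk0le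
    have hcast : (k0.toNat : ℝ) = (k0 : ℝ) := by exact_mod_cast Int.toNat_of_nonneg hk0nn
    refine Set.mem_biUnion hmem ?_
    have hfr1 : p ≤ c * y - k0 := hfr.1
    have hfr2 : c * y - k0 ≤ q := hfr.2
    rw [hcast]
    constructor
    · rw [div_le_iff₀ hc0, mul_comm]; linarith
    · rw [le_div_iff₀ hc0, mul_comm]; linarith
  calc volume (Set.Icc (0:ℝ) 1 ∩ {y | Int.fract (c * y) ∈ Set.Icc p q})
      ≤ volume (⋃ k ∈ Finset.range (K+1), Set.Icc ((p+(k:ℝ))/c) ((q+k)/c)) := measure_mono hsub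
    _ ≤ ∑ k ∈ Finset.range (K+1), volume (Set.Icc ((p+(k:ℝ))/c) ((q+k)/c)) :=
        measure_biUnion_finset_le _ _
    _ = ∑ k ∈ Finset.range (K+1), ENNReal.ofReal ((q-p)/c) := by
        refine Finset.sum_congr rfl fun k _ => ?_
        rw [Real.volume_Icc]; ring_nf
    _ = (K+1) * ENNReal.ofReal ((q-p)/c) := by
        rw [Finset.sum_const, Finset.card_range, nsmul_eq_mul]; push_cast; ring
    _ ≤ 2 * ENNReal.ofReal (q - p) := by
        have h1 : ((K:ℝ)+1) ≤ 2 * c := by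
          have : (K:ℝ) ≤ c := by
            rw [hK]
            calc ((⌊c⌋.toNat : ℝ)) = (⌊c⌋ : ℝ) := by
                  exact_mod_cast Int.toNat_of_nonneg (Int.floor_nonneg.mpr (by linarith))
              _ ≤ c := Int.floor_le c
          linarith
        have : ((K:ℝ)+1) * ((q-p)/c) ≤ 2 * (q-p) := by
          rw [div_eq_mul_inv]
          have h2 : ((K:ℝ)+1) * ((q-p) * c⁻¹) = ((K:ℝ)+1) * c⁻¹ * (q-p) := by ring
          rw [h2]
          have h3 : ((K:ℝ)+1) * c⁻¹ ≤ 2 := by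
            rw [← div_eq_mul_inv, div_le_iff₀ hc0]; linarith
          nlinarith [sub_nonneg.mpr hpq]
        calc ((K:ℕ)+1 : ℝ≥0∞) * ENNReal.ofReal ((q-p)/c)
            = ENNReal.ofReal ((K:ℝ)+1) * ENNReal.ofReal ((q-p)/c) := by
              congr 1
              rw [ENNReal.ofReal_add (by positivity) zero_le_one]
              simp [ENNReal.ofReal_natCast]
          _ = ENNReal.ofReal (((K:ℝ)+1) * ((q-p)/c)) := by
              rw [ENNReal.ofReal_mul (by positivity)]
          _ ≤ ENNReal.ofReal (2 * (q-p)) := ENNReal.ofReal_le_ofReal this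
          _ = 2 * ENNReal.ofReal (q-p) := by
              rw [ENNReal.ofReal_mul (by norm_num)]; norm_num

lemma count_strict_mono {A : Set ℕ} {n1 n2 : ℕ} (h1 : n1 ∈ A) (h11 : 1 ≤ n1)
    (h2 : n2 ∈ A) (hlt : n1 < n2) :
    (A ∩ Set.Icc 1 n1).ncard < (A ∩ Set.Icc 1 n2).ncard := by
  have hfin : (A ∩ Set.Icc 1 n2).Finite :=
    Set.Finite.subset (Set.finite_Icc 1 n2) Set.inter_subset_right
  refine Set.ncard_lt_ncard ?_ hfin
  constructor
  · exact Set.inter_subset_inter_right A (Set.Icc_subset_Icc_right hlt.le)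
  · intro hsub
    have : n2 ∈ A ∩ Set.Icc 1 n1 := hsub ⟨h2, le_trans h11 hlt.le, le_refl n2⟩
    exact absurd this.2.2 (not_le.mpr hlt)

lemma tsum_fin (a d : ℝ) (hd : 0 < d) (hda : d < a) (A : Set ℕ) (N1 : ℕ) (hN1 : 1 ≤ N1)
    (hbound : ∀ N, N1 ≤ N → ((A ∩ Set.Icc 1 N).ncard : ℝ) ≤ (N:ℝ) ^ d) :
    ∑' n : ℕ, (A ∩ Set.Ici 1).indicator (fun n => ENNReal.ofReal ((n:ℝ) ^ (-a))) n ≠ ⊤ := by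
  set e : ℝ := -(a/d) with he
  have hane : 0 < a := lt_trans hd hda
  have he1 : e < -1 := by
    rw [he, neg_lt_neg_iff]
    rw [lt_div_iff₀ hd]; linarith
  set m : ℕ → ℕ := fun n => (A ∩ Set.Icc 1 n).ncard with hm
  set h1 : ℕ → ℝ≥0∞ := fun n =>
    if n < N1 then (if n ∈ A ∧ 1 ≤ n then ENNReal.ofReal ((n:ℝ) ^ (-a)) else 0) else 0 with hh1
  set h2 : ℕ → ℝ≥0∞ := fun n =>
    if n ∈ A ∧ N1 ≤ n then ENNReal.ofReal ((m n : ℝ) ^ e) else 0 with hh2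
  -- termwise bound
  have hind : ∀ n : ℕ, (A ∩ Set.Ici 1).indicator (fun n => ENNReal.ofReal ((n:ℝ) ^ (-a))) n
      = if n ∈ A ∧ 1 ≤ n then ENNReal.ofReal ((n:ℝ) ^ (-a)) else 0 := by
    intro n
    rw [Set.indicator_apply]
    congr 1
  have hterm : ∀ n, (A ∩ Set.Ici 1).indicator (fun n => ENNReal.ofReal ((n:ℝ) ^ (-a))) n
      ≤ h1 n + h2 n := by
    intro n
    rw [hind]
    rcases lt_or_ge n N1 with hn | hn
    · simp only [hh1, if_pos hn]; exact le_self_add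
    · simp only [hh1, if_neg (not_lt.mpr hn), zero_add, hh2]
      by_cases hA : n ∈ A
      · have h1n : 1 ≤ n := le_trans hN1 hn
        rw [if_pos ⟨hA, h1n⟩, if_pos ⟨hA, hn⟩]
        apply ENNReal.ofReal_le_ofReal
        have hm1 : 1 ≤ m n := by
          rw [hm]
          exact (Set.ncard_pos
            (Set.Finite.subset (Set.finite_Icc 1 n) Set.inter_subset_right)).mpr
            ⟨n, hA, h1n, le_refl n⟩
        have hm0 : (0:ℝ) < (m n : ℝ) := by exact_mod_cast hm1
        have hmb : ((m n : ℝ)) ≤ (n:ℝ) ^ d := hbound n hn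
        have key : ((n:ℝ) ^ d) ^ e ≤ ((m n : ℝ)) ^ e :=
          Real.rpow_le_rpow_of_nonpos hm0 hmb (by rw [he]; exact neg_nonpos.mpr (by positivity))
        calc (n:ℝ) ^ (-a) = ((n:ℝ) ^ d) ^ e := by
              rw [← Real.rpow_mul (Nat.cast_nonneg n), he]
              congr 1
              field_simp
          _ ≤ ((m n : ℝ)) ^ e := key
      · simp [hA]
  refine ne_top_of_le_ne_top ?_ (le_trans (ENNReal.tsum_le_tsum hterm) ENNReal.tsum_add.le)
  apply ENNReal.add_ne_top.mpr
  constructor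
  · -- finitely supported part
    have : ∑' n, h1 n = ∑ n ∈ Finset.range N1, h1 n := by
      apply tsum_eq_sum
      intro n hn
      simp only [hh1, if_neg (not_lt.mpr (le_of_not_gt (fun h => hn (Finset.mem_range.mpr h))))]
    rw [this]
    apply ENNReal.sum_ne_top.mpr
    intro n _
    simp only [hh1]
    split_ifs <;> simp [ENNReal.ofReal_ne_top]
  · -- tail part via injectivity
    set S : Set ℕ := {n | n ∈ A ∧ N1 ≤ n} with hS
    have hsupp : Function.support h2 ⊆ S := by
      intro n hn
      by_contra hns
      apply hn
      simp only [hh2]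
      exact if_neg hns
    have heq : ∑' n : S, h2 n = ∑' n, h2 n := tsum_subtype_eq_of_support_subset hsupp
    rw [← heq]
    have hle : ∑' n : S, h2 (n : ℕ) ≤ ∑' k : ℕ, ENNReal.ofReal ((k:ℝ) ^ e) := by
      have hinj : Function.Injective (fun n : S => m (n : ℕ)) := by
        intro n1 n2 hmn
        simp only at hmn
        by_contra hne
        have hne' : (n1 : ℕ) ≠ (n2 : ℕ) := fun h => hne (Subtype.ext h)
        rcases lt_or_gt_of_ne hne' with h | h
        · exact absurd hmn (ne_of_lt (count_strict_mono n1.2.1 (le_trans hN1 n1.2.2) n2.2.1 h))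
        · exact absurd hmn.symm (ne_of_lt (count_strict_mono n2.2.1 (le_trans hN1 n2.2.2) n1.2.1 h))
      calc ∑' n : S, h2 (n : ℕ)
          ≤ ∑' n : S, ENNReal.ofReal (((m (n : ℕ)) : ℝ) ^ e) := by
            apply ENNReal.tsum_le_tsum
            intro n
            simp only [hh2]
            split_ifs <;> simp
        _ ≤ ∑' k : ℕ, ENNReal.ofReal ((k:ℝ) ^ e) :=
            ENNReal.tsum_comp_le_tsum_of_injective hinj (fun k => ENNReal.ofReal ((k:ℝ) ^ e))
    refine ne_top_of_le_ne_top ?_ hle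
    have hsummable : Summable (fun k : ℕ => (k:ℝ) ^ e) := Real.summable_nat_rpow.mpr he1
    rw [← ENNReal.ofReal_tsum_of_nonneg (fun k => Real.rpow_nonneg (Nat.cast_nonneg k) e) hsummable]
    exact ENNReal.ofReal_ne_top

end Aux

/-- transversality, small dimension case: for a lacunary sequence
`(u_n)` and `A` with `dim̄_M(A) < a`, for a.e. `y ∈ [0,1]` the mass dimension of
`A ∩ Λ_y` exists and equals `0`, i.e. `log|A ∩ Λ_y ∩ [1,N]| / log N → 0`. -/
theorem transversality_small (a : ℝ) (ha : a ∈ Set.Ioo (0:ℝ) 1)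
    (u : ℕ → ℝ) (hu : ∀ n, 0 < u n) (hu1 : 1 ≤ u 1)
    (ρ : ℝ) (hρ : 1 < ρ)
    (hlac : ∀ n : ℕ, 1 ≤ n → u (n + 1) / u n ≥ ρ)
    (I : ℕ → Set ℝ) (hIsub : ∀ n, I n ⊆ Set.Icc (0:ℝ) 1)
    (hIint : ∀ n : ℕ, 1 ≤ n → ∃ p q : ℝ, I n = Set.Icc p q)
    (hIvol : ∀ n : ℕ, 1 ≤ n → volume (I n) = ENNReal.ofReal ((n:ℝ) ^ (-a)))
    (A : Set ℕ) (hA : upperMassDim A < a) :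
    ∀ᵐ y ∂(volume.restrict (Set.Icc (0:ℝ) 1)),
      Tendsto (fun N : ℕ =>
          Real.log (((A ∩ {n : ℕ | Int.fract (u n * y) ∈ I n} ∩ Set.Icc 1 N).ncard : ℝ))
            / Real.log N)
        atTop (nhds 0) := by
  classical
  obtain ⟨ha0, ha1⟩ := ha
  -- the sequence u is at least 1 from index 1 on
  have hu_ge : ∀ n : ℕ, 1 ≤ n → 1 ≤ u n := by
    intro n hn
    induction n, hn using Nat.le_induction with
    | base => exact hu1
    | succ n hn ih =>
      have h := hlac n hn
      have hun : 0 < u n := hu n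
      rw [ge_iff_le, le_div_iff₀ hun] at h
      nlinarith
  -- counting function basics
  set f : ℕ → ℝ := fun N => Real.log ((A ∩ Set.Icc 1 N).ncard : ℝ) / Real.log N with hf
  have hcount_le : ∀ N : ℕ, (A ∩ Set.Icc 1 N).ncard ≤ N := by
    intro N
    calc (A ∩ Set.Icc 1 N).ncard ≤ (Set.Icc 1 N).ncard :=
          Set.ncard_le_ncard Set.inter_subset_right (Set.finite_Icc 1 N)
      _ = N := by
          rw [show (Set.Icc 1 N : Set ℕ) = ↑(Finset.Icc 1 N) by simp]
          rw [Set.ncard_coe_finset, Nat.card_Icc]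
          omega
  have hf_ub : ∀ N, f N ≤ 1 := by
    intro N
    rcases eq_or_lt_of_le (Real.log_natCast_nonneg N) with hl | hl
    · rw [hf]; simp only [← hl, div_zero]; norm_num
    · rw [hf, div_le_one hl]
      rcases Nat.eq_zero_or_pos (A ∩ Set.Icc 1 N).ncard with h0 | h0
      · rw [h0]; simpa using Real.log_natCast_nonneg N
      · apply Real.log_le_log (by exact_mod_cast h0)
        exact_mod_cast hcount_le N
  -- pick an exponent d strictly between the upper mass dimension and a
  set M : ℝ := max (upperMassDim A) 0 with hM
  set d : ℝ := (M + a) / 2 with hd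
  have hMa : M < a := max_lt hA ha0
  have hM0 : 0 ≤ M := le_max_right _ _
  have hd0 : 0 < d := by rw [hd]; linarith
  have hda : d < a := by rw [hd]; linarith
  have hlimlt : Filter.limsup f atTop < d := by
    have : upperMassDim A ≤ M := le_max_left _ _
    have h2 : upperMassDim A < d := by rw [hd]; linarith [this]
    exact lt_of_le_of_lt (le_of_eq rfl) h2
  have hbdd : Filter.IsBoundedUnder (· ≤ ·) atTop f :=
    ⟨1, Filter.eventually_map.mpr (Filter.Eventually.of_forall hf_ub)⟩
  have hev : ∀ᶠ N in atTop, f N < d := Filter.eventually_lt_of_limsup_lt hlimlt hbdd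
  obtain ⟨N0, hN0⟩ := (hev.and (Filter.eventually_ge_atTop 2)).exists_forall_of_atTop
  have hN0_2 : 2 ≤ N0 := (hN0 N0 le_rfl).2
  have hbound : ∀ N, N0 ≤ N → ((A ∩ Set.Icc 1 N).ncard : ℝ) ≤ (N:ℝ) ^ d := by
    intro N hN
    obtain ⟨hfN, hN2⟩ := hN0 N hN
    have hlogN : 0 < Real.log N := Real.log_pos (by exact_mod_cast lt_of_lt_of_le one_lt_two hN2)
    rcases Nat.eq_zero_or_pos (A ∩ Set.Icc 1 N).ncard with h0 | h0
    · rw [h0]; push_cast; positivity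
    · have hx : (0:ℝ) < ((A ∩ Set.Icc 1 N).ncard : ℝ) := by exact_mod_cast h0
      have hy : (0:ℝ) < (N:ℝ) := by positivity
      have := (div_lt_iff₀ hlogN).mp hfN
      exact le_of_lt ((Real.lt_rpow_iff_log_lt hx hy).mpr this)
  have htsum := tsum_fin a d hd0 hda A N0 (le_trans one_le_two hN0_2) hbound
  -- the exceptional sets
  set s : ℕ → Set ℝ := fun n =>
    {y | y ∈ Set.Icc (0:ℝ) 1 ∧ (n ∈ A ∧ 1 ≤ n) ∧ Int.fract (u n * y) ∈ I n} with hs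
  have hsvol : ∀ n, volume (s n)
      ≤ 2 * (A ∩ Set.Ici 1).indicator (fun n => ENNReal.ofReal ((n:ℝ) ^ (-a))) n := by
    intro n
    by_cases hn : n ∈ A ∧ 1 ≤ n
    · obtain ⟨p, q, hpq⟩ := hIint n hn.2
      have hseq : s n = Set.Icc (0:ℝ) 1 ∩ {y | Int.fract (u n * y) ∈ Set.Icc p q} := by
        rw [hs, ← hpq]
        ext y
        simp only [Set.mem_setOf_eq, Set.mem_inter_iff]
        tauto
      have hiv : ENNReal.ofReal (q - p) = ENNReal.ofReal ((n:ℝ) ^ (-a)) := by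
        rw [← Real.volume_Icc, ← hpq, hIvol n hn.2]
      rw [hseq, Set.indicator_of_mem (by exact ⟨hn.1, hn.2⟩ : n ∈ A ∩ Set.Ici 1)]
      calc volume (Set.Icc (0:ℝ) 1 ∩ {y | Int.fract (u n * y) ∈ Set.Icc p q})
          ≤ 2 * ENNReal.ofReal (q - p) := meas_frac_le (u n) (hu_ge n hn.2) p q
        _ = 2 * ENNReal.ofReal ((n:ℝ) ^ (-a)) := by rw [hiv]
    · have : s n = ∅ := by
        rw [hs]
        ext y
        simp only [Set.mem_setOf_eq, Set.mem_empty_iff_false, iff_false]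
        tauto
      rw [this]
      simp
  have hsum_ne_top : ∑' n, volume (s n) ≠ ⊤ := by
    refine ne_top_of_le_ne_top ?_ (ENNReal.tsum_le_tsum hsvol)
    rw [ENNReal.tsum_mul_left]
    exact ENNReal.mul_ne_top (by norm_num) htsum
  -- Borel-Cantelli
  have hBC : ∀ᵐ y ∂(volume : Measure ℝ), ∀ᶠ n in atTop, y ∉ s n :=
    MeasureTheory.ae_eventually_notMem hsum_ne_top
  have hBC' : ∀ᵐ y ∂(volume.restrict (Set.Icc (0:ℝ) 1)), ∀ᶠ n in atTop, y ∉ s n :=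
    hBC.filter_mono (MeasureTheory.ae_mono Measure.restrict_le_self)
  filter_upwards [hBC', ae_restrict_mem measurableSet_Icc] with y hyev hy
  obtain ⟨N2, hN2⟩ := Filter.eventually_atTop.mp hyev
  -- the intersection is contained in [1, N2)
  have hcard : ∀ N : ℕ,
      ((A ∩ {n : ℕ | Int.fract (u n * y) ∈ I n} ∩ Set.Icc 1 N).ncard : ℝ) ≤ (N2 : ℝ) := by
    intro N
    have hsub : A ∩ {n : ℕ | Int.fract (u n * y) ∈ I n} ∩ Set.Icc 1 N
        ⊆ ↑(Finset.range N2) := by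
      rintro n ⟨⟨hnA, hnI⟩, hn1, _⟩
      simp only [Finset.coe_range, Set.mem_Iio]
      by_contra hcon
      push_neg at hcon
      exact hN2 n hcon ⟨hy, ⟨hnA, hn1⟩, hnI⟩
    have := Set.ncard_le_ncard hsub (Finset.finite_toSet _)
    rw [Set.ncard_coe_finset, Finset.card_range] at this
    exact_mod_cast this
  -- squeeze
  have hup : ∀ N : ℕ, Real.log (((A ∩ {n : ℕ | Int.fract (u n * y) ∈ I n}
      ∩ Set.Icc 1 N).ncard : ℝ)) / Real.log N ≤ Real.log ((N2 : ℝ) + 1) / Real.log N := by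
    intro N
    have hnum : Real.log (((A ∩ {n : ℕ | Int.fract (u n * y) ∈ I n}
        ∩ Set.Icc 1 N).ncard : ℝ)) ≤ Real.log ((N2 : ℝ) + 1) := by
      rcases Nat.eq_zero_or_pos ((A ∩ {n : ℕ | Int.fract (u n * y) ∈ I n}
          ∩ Set.Icc 1 N).ncard) with h0 | h0
      · rw [h0]
        push_cast
        rw [Real.log_zero]
        apply Real.log_nonneg
        have : (0:ℝ) ≤ (N2:ℝ) := Nat.cast_nonneg N2
        linarith
      · apply Real.log_le_log (by exact_mod_cast h0)
        have := hcard N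
        linarith
    rcases eq_or_lt_of_le (Real.log_natCast_nonneg N) with hl | hl
    · rw [← hl, div_zero, div_zero]
    · exact div_le_div_of_nonneg_right hnum hl.le
  refine tendsto_of_tendsto_of_tendsto_of_le_of_le (g := fun _ : ℕ => (0:ℝ))
    (h := fun N : ℕ => Real.log ((N2:ℝ)+1) / Real.log N)
    tendsto_const_nhds ?_ ?_ hup
  · exact Filter.Tendsto.div_atTop tendsto_const_nhds
      (Real.tendsto_log_atTop.comp tendsto_natCast_atTop_atTop)
  · intro N
    exact div_nonneg (Real.log_natCast_nonneg _) (Real.log_natCast_nonneg N)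
end

section
/- Let a ∈ (0,1), let u ≥ 1 be real and I ⊆ [0,1] an interval with λ(I) = ε. Then the set u^{-1}(I) = {y ∈ [0,1] : frac(u y) ∈ I} satisfies |λ(u^{-1}(I)) − ε| ≤ ε/u. Moreover, for u < v and intervals I, J ⊆ [0,1] with λ(I) = ε, λ(J) = η, one has |λ(u^{-1}(I) ∩ v^{-1}(J)) − εη| ≤ η(u/v + ε/u + 1/u + 1/v) (up to an absolute constant factor). -/
open MeasureTheory Filter

lemma frac_mem_Icc_interval {v p q y : ℝ} (hv : 0 < v) (hf : Int.fract (v*y) ∈ Set.Icc p q) :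
    y ∈ Set.Icc ((((⌊v*y⌋:ℤ):ℝ)+p)/v) ((((⌊v*y⌋:ℤ):ℝ)+q)/v) := by
  obtain ⟨hf1, hf2⟩ := hf
  have hfr : Int.fract (v*y) = v*y - ⌊v*y⌋ := rfl
  rw [hfr] at hf1 hf2
  constructor
  · rw [div_le_iff₀ hv]; nlinarith
  · rw [le_div_iff₀ hv]; nlinarith

lemma frac_upper (v p q α β : ℝ) (hv : 0 < v) (hpq : p ≤ q) :
    volume {y ∈ Set.Icc α β | Int.fract (v*y) ∈ Set.Icc p q}
      ≤ ENNReal.ofReal (((⌊v*β⌋ : ℝ) - ⌊v*α⌋ + 1) * ((q-p)/v)) := by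
  have hsub : {y ∈ Set.Icc α β | Int.fract (v*y) ∈ Set.Icc p q}
      ⊆ ⋃ i ∈ Finset.Icc ⌊v*α⌋ ⌊v*β⌋, Set.Icc (((i:ℝ)+p)/v) (((i:ℝ)+q)/v) := by
    rintro y ⟨⟨hy1, hy2⟩, hf⟩
    have hmem : ⌊v*y⌋ ∈ Finset.Icc ⌊v*α⌋ ⌊v*β⌋ := by
      simp only [Finset.mem_Icc]
      exact ⟨Int.floor_le_floor (by nlinarith), Int.floor_le_floor (by nlinarith)⟩
    exact Set.mem_biUnion hmem (frac_mem_Icc_interval hv hf)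
  calc volume {y ∈ Set.Icc α β | Int.fract (v*y) ∈ Set.Icc p q}
      ≤ volume (⋃ i ∈ Finset.Icc ⌊v*α⌋ ⌊v*β⌋, Set.Icc (((i:ℝ)+p)/v) (((i:ℝ)+q)/v)) :=
        measure_mono hsub
    _ ≤ ∑ i ∈ Finset.Icc ⌊v*α⌋ ⌊v*β⌋, volume (Set.Icc (((i:ℝ)+p)/v) (((i:ℝ)+q)/v)) :=
        measure_biUnion_finset_le _ _
    _ = ∑ i ∈ Finset.Icc ⌊v*α⌋ ⌊v*β⌋, ENNReal.ofReal ((q-p)/v) := by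
        refine Finset.sum_congr rfl fun i _ => ?_
        rw [Real.volume_Icc]; ring_nf
    _ ≤ ENNReal.ofReal (((⌊v*β⌋ : ℝ) - ⌊v*α⌋ + 1) * ((q-p)/v)) := by
        rw [Finset.sum_const, Int.card_Icc]
        rcases le_or_gt ⌊v*α⌋ ⌊v*β⌋ with h | h
        · rw [nsmul_eq_mul, ← ENNReal.ofReal_natCast, ← ENNReal.ofReal_mul (by positivity)]
          apply ENNReal.ofReal_le_ofReal
          have h2 : ((⌊v*β⌋ + 1 - ⌊v*α⌋).toNat : ℤ) = ⌊v*β⌋ + 1 - ⌊v*α⌋ :=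
            Int.toNat_of_nonneg (by omega)
          have hc : ((⌊v*β⌋ + 1 - ⌊v*α⌋).toNat : ℝ) = (⌊v*β⌋:ℝ) - ⌊v*α⌋ + 1 := by
            rw [← Int.cast_natCast (R := ℝ), h2]; push_cast; ring
          rw [hc]
        · have h0 : (⌊v*β⌋ + 1 - ⌊v*α⌋).toNat = 0 := by omega
          simp [h0]

lemma Ico_pairwise (u p q : ℝ) (hu : 0 < u) (hp : 0 ≤ p) (hq : q ≤ 1) (s : Finset ℤ) :
    (↑s : Set ℤ).PairwiseDisjoint
      (fun i : ℤ => Set.Ico (((i:ℝ)+p)/u) (((i:ℝ)+q)/u)) := by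
  intro i _ j _ hij
  apply Set.Ico_disjoint_Ico.mpr
  have h1 : ((i:ℝ)+1 ≤ j) ∨ ((j:ℝ)+1 ≤ i) := by
    rcases hij.lt_or_gt with hl | hl
    · left; exact_mod_cast Int.add_one_le_iff.mpr hl
    · right; exact_mod_cast Int.add_one_le_iff.mpr hl
  rcases h1 with h1 | h1
  · refine le_trans (min_le_left _ _) (le_trans ?_ (le_max_right _ _))
    gcongr ?_ / u
    linarith
  · refine le_trans (min_le_right _ _) (le_trans ?_ (le_max_left _ _))
    gcongr ?_ / u
    linarith

lemma frac_lower (v p q α β : ℝ) (m n : ℤ) (hv : 0 < v) (hp : 0 ≤ p) (hpq : p ≤ q) (hq : q ≤ 1)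
    (hm : α ≤ ((m:ℝ) + p)/v) (hn : ((n:ℝ) + q)/v ≤ β) :
    ENNReal.ofReal (((n:ℝ) + 1 - m) * ((q-p)/v))
      ≤ volume {y ∈ Set.Ico α β | Int.fract (v*y) ∈ Set.Icc p q} := by
  rcases le_or_gt ((n:ℝ) + 1 - m) 0 with h | h
  · rw [ENNReal.ofReal_eq_zero.mpr (by nlinarith [div_nonneg (sub_nonneg.mpr hpq) hv.le])]
    exact zero_le
  have hmn : m ≤ n := by
    by_contra hc
    push_neg at hc
    have : ((n:ℝ)) + 1 ≤ m := by exact_mod_cast Int.add_one_le_iff.mpr hc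
    linarith
  have hsub : (⋃ i ∈ Finset.Icc m n, Set.Ico (((i:ℝ)+p)/v) (((i:ℝ)+q)/v))
      ⊆ {y ∈ Set.Ico α β | Int.fract (v*y) ∈ Set.Icc p q} := by
    intro y hy
    simp only [Set.mem_iUnion, Finset.mem_Icc, exists_prop] at hy
    obtain ⟨i, ⟨him, hin⟩, hy1, hy2⟩ := hy
    have hiv1 : (i:ℝ) + p ≤ v * y := by rw [div_le_iff₀ hv] at hy1; linarith
    have hiv2 : v * y < (i:ℝ) + q := by
      have := (lt_div_iff₀ hv).mp hy2; linarith
    have hfloor : ⌊v * y⌋ = i := by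
      apply Int.floor_eq_iff.mpr; constructor <;> push_cast <;> nlinarith
    have hfract : Int.fract (v*y) = v*y - i := by rw [Int.fract, hfloor]
    have himR : (m:ℝ) ≤ i := by exact_mod_cast him
    have hinR : (i:ℝ) ≤ n := by exact_mod_cast hin
    refine ⟨⟨?_, ?_⟩, ?_, ?_⟩
    · calc α ≤ ((m:ℝ) + p)/v := hm
        _ ≤ ((i:ℝ)+p)/v := by gcongr
        _ ≤ y := hy1
    · calc y < ((i:ℝ)+q)/v := hy2
        _ ≤ ((n:ℝ)+q)/v := by gcongr
        _ ≤ β := hn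
    · rw [hfract]; linarith
    · rw [hfract]; linarith
  have hdisj := Ico_pairwise v p q hv hp hq (Finset.Icc m n)
  have hcount : volume (⋃ i ∈ Finset.Icc m n, Set.Ico (((i:ℝ)+p)/v) (((i:ℝ)+q)/v))
      = ENNReal.ofReal (((n:ℝ) + 1 - m) * ((q-p)/v)) := by
    rw [measure_biUnion_finset hdisj (fun i _ => measurableSet_Ico)]
    have : ∀ i ∈ Finset.Icc m n, volume (Set.Ico (((i:ℝ)+p)/v) (((i:ℝ)+q)/v))
        = ENNReal.ofReal ((q-p)/v) := by
      intro i _; rw [Real.volume_Ico]; ring_nf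
    rw [Finset.sum_congr rfl this, Finset.sum_const, Int.card_Icc]
    have h2 : ((n + 1 - m).toNat : ℤ) = n + 1 - m := Int.toNat_of_nonneg (by omega)
    have hc : ((n + 1 - m).toNat : ℝ) = (n:ℝ) + 1 - m := by
      rw [← Int.cast_natCast (R := ℝ), h2]; push_cast; ring
    rw [nsmul_eq_mul, ← ENNReal.ofReal_natCast, ← ENNReal.ofReal_mul (by positivity), hc]
  rw [← hcount]
  exact measure_mono hsub

lemma part1 (u ε : ℝ) (I : Set ℝ) (hu : 1 ≤ u) (hε : 0 ≤ ε) (hI : I ⊆ Set.Icc (0:ℝ) 1)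
    (hIq : ∃ p q : ℝ, I = Set.Icc p q) (hvol : volume I = ENNReal.ofReal ε) :
    |(volume {y ∈ Set.Icc (0:ℝ) 1 | Int.fract (u * y) ∈ I}).toReal - ε| ≤ ε / u := by
  obtain ⟨p, q, rfl⟩ := hIq
  have hu0 : (0:ℝ) < u := lt_of_lt_of_le one_pos hu
  rcases lt_or_ge q p with hqp | hpq
  · have hemp : Set.Icc p q = (∅ : Set ℝ) := Set.Icc_eq_empty (not_le.mpr hqp)
    rw [hemp] at hvol ⊢
    have hε0 : ε = 0 := le_antisymm (ENNReal.ofReal_eq_zero.mp (by simpa using hvol.symm)) hε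
    have hset : {y ∈ Set.Icc (0:ℝ) 1 | Int.fract (u * y) ∈ (∅ : Set ℝ)} = ∅ := by
      ext y; simp
    rw [hset, hε0]
    simp
  · have hp : 0 ≤ p := (hI (Set.left_mem_Icc.mpr hpq)).1
    have hq : q ≤ 1 := (hI (Set.right_mem_Icc.mpr hpq)).2
    have hεeq : q - p = ε := by
      rw [Real.volume_Icc] at hvol
      exact (ENNReal.ofReal_eq_ofReal_iff (by linarith) hε).mp hvol
    have hfl1 : (1:ℤ) ≤ ⌊u⌋ := Int.le_floor.mpr (by simpa using hu)
    have hflR : (1:ℝ) ≤ (⌊u⌋:ℝ) := by exact_mod_cast hfl1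
    have hfle : (⌊u⌋:ℝ) ≤ u := Int.floor_le u
    have hw0 : 0 ≤ ε / u := div_nonneg hε hu0.le
    have hw : u * (ε/u) = ε := by field_simp
    have hupper := frac_upper u p q 0 1 hu0 hpq
    simp only [mul_one, mul_zero, Int.floor_zero, Int.cast_zero, sub_zero] at hupper
    have hne : volume {y ∈ Set.Icc (0:ℝ) 1 | Int.fract (u * y) ∈ Set.Icc p q} ≠ ⊤ :=
      ne_top_of_le_ne_top ENNReal.ofReal_ne_top hupper
    have hU : (volume {y ∈ Set.Icc (0:ℝ) 1 | Int.fract (u * y) ∈ Set.Icc p q}).toReal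
        ≤ ((⌊u⌋:ℝ) + 1) * ((q-p)/u) :=
      ENNReal.toReal_le_of_le_ofReal
        (mul_nonneg (by linarith) (div_nonneg (by linarith) hu0.le)) hupper
    have hlower := frac_lower u p q 0 1 0 (⌊u⌋ - 1) hu0 hp hpq hq
      (by positivity) (by
        push_cast
        rw [div_le_one hu0]
        linarith)
    have hmono : volume {y ∈ Set.Ico (0:ℝ) 1 | Int.fract (u * y) ∈ Set.Icc p q}
        ≤ volume {y ∈ Set.Icc (0:ℝ) 1 | Int.fract (u * y) ∈ Set.Icc p q} := by
      apply measure_mono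
      rintro y ⟨hy1, hy2⟩
      exact ⟨Set.Ico_subset_Icc_self hy1, hy2⟩
    have hL : ((⌊u⌋:ℝ)) * ((q-p)/u)
        ≤ (volume {y ∈ Set.Icc (0:ℝ) 1 | Int.fract (u * y) ∈ Set.Icc p q}).toReal := by
      have h1 := hlower.trans hmono
      have h2 := (ENNReal.ofReal_le_iff_le_toReal hne).mp h1
      push_cast at h2
      linarith
    rw [abs_le]
    rw [hεeq] at hU hL
    have hu1 : u - 1 ≤ (⌊u⌋:ℝ) := by linarith [Int.lt_floor_add_one u]
    constructor
    · nlinarith [mul_le_mul_of_nonneg_right hfle hw0, mul_le_mul_of_nonneg_right hu1 hw0]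
    · nlinarith [mul_le_mul_of_nonneg_right hfle hw0, mul_le_mul_of_nonneg_right hu1 hw0]

set_option maxHeartbeats 1000000 in
lemma part2 (u v ε η : ℝ) (I J : Set ℝ) (hu : 1 ≤ u) (huv : u < v)
    (hε : 0 ≤ ε) (hη : 0 ≤ η)
    (hI : I ⊆ Set.Icc (0:ℝ) 1) (hJ : J ⊆ Set.Icc (0:ℝ) 1)
    (hIq : ∃ p q : ℝ, I = Set.Icc p q) (hJq : ∃ p q : ℝ, J = Set.Icc p q)
    (hvolI : volume I = ENNReal.ofReal ε) (hvolJ : volume J = ENNReal.ofReal η) :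
    |(volume {y ∈ Set.Icc (0:ℝ) 1 |
        Int.fract (u * y) ∈ I ∧ Int.fract (v * y) ∈ J}).toReal - ε * η|
      ≤ 4 * (η * (u / v + ε / u + 1 / u + 1 / v)) := by
  obtain ⟨p, q, rfl⟩ := hIq
  obtain ⟨r, s, rfl⟩ := hJq
  have hu0 : (0:ℝ) < u := lt_of_lt_of_le one_pos hu
  have hv0 : (0:ℝ) < v := hu0.trans huv
  have hRHS : 0 ≤ 4 * (η * (u / v + ε / u + 1 / u + 1 / v)) := by positivity
  rcases lt_or_ge q p with hqp | hpq
  · have hemp : Set.Icc p q = (∅ : Set ℝ) := Set.Icc_eq_empty (not_le.mpr hqp)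
    rw [hemp] at hvolI ⊢
    have hε0 : ε = 0 := le_antisymm (ENNReal.ofReal_eq_zero.mp (by simpa using hvolI.symm)) hε
    have hset : {y ∈ Set.Icc (0:ℝ) 1 |
        Int.fract (u * y) ∈ (∅:Set ℝ) ∧ Int.fract (v * y) ∈ Set.Icc r s} = ∅ := by
      ext y; simp
    rw [hset, hε0]
    simp only [measure_empty, ENNReal.toReal_zero, zero_mul, sub_zero, abs_zero]
    positivity
  rcases lt_or_ge s r with hsr | hrs
  · have hemp : Set.Icc r s = (∅ : Set ℝ) := Set.Icc_eq_empty (not_le.mpr hsr)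
    rw [hemp] at hvolJ ⊢
    have hη0 : η = 0 := le_antisymm (ENNReal.ofReal_eq_zero.mp (by simpa using hvolJ.symm)) hη
    have hset : {y ∈ Set.Icc (0:ℝ) 1 |
        Int.fract (u * y) ∈ Set.Icc p q ∧ Int.fract (v * y) ∈ (∅:Set ℝ)} = ∅ := by
      ext y; simp
    rw [hset, hη0]
    simp
  -- main case
  have hp : 0 ≤ p := (hI (Set.left_mem_Icc.mpr hpq)).1
  have hq : q ≤ 1 := (hI (Set.right_mem_Icc.mpr hpq)).2
  have hr : 0 ≤ r := (hJ (Set.left_mem_Icc.mpr hrs)).1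
  have hs : s ≤ 1 := (hJ (Set.right_mem_Icc.mpr hrs)).2
  have hεeq : q - p = ε := by
    rw [Real.volume_Icc] at hvolI
    exact (ENNReal.ofReal_eq_ofReal_iff (by linarith) hε).mp hvolI
  have hηeq : s - r = η := by
    rw [Real.volume_Icc] at hvolJ
    exact (ENNReal.ofReal_eq_ofReal_iff (by linarith) hη).mp hvolJ
  set S := {y ∈ Set.Icc (0:ℝ) 1 |
      Int.fract (u * y) ∈ Set.Icc p q ∧ Int.fract (v * y) ∈ Set.Icc r s} with hSdef
  have hfl1 : (1:ℤ) ≤ ⌊u⌋ := Int.le_floor.mpr (by simpa using hu)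
  have hflR : (1:ℝ) ≤ (⌊u⌋:ℝ) := by exact_mod_cast hfl1
  have hfle : (⌊u⌋:ℝ) ≤ u := Int.floor_le u
  have hu1 : u - 1 ≤ (⌊u⌋:ℝ) := by linarith [Int.lt_floor_add_one u]
  have hηv : 0 ≤ (s-r)/v := div_nonneg (by linarith) hv0.le
  have hC0 : 0 ≤ (v*(q-p)/u + 2) * ((s-r)/v) := by
    have h1 : 0 ≤ v*(q-p)/u := div_nonneg (mul_nonneg hv0.le (by linarith)) hu0.le
    exact mul_nonneg (by linarith) hηv
  have hne : volume S ≠ ⊤ := by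
    refine ne_top_of_le_ne_top ?_ (measure_mono (fun y hy => hy.1))
    rw [Real.volume_Icc]; exact ENNReal.ofReal_ne_top
  -- UPPER BOUND
  have hup : volume S ≤ ENNReal.ofReal ((u+1) * ((v*(q-p)/u + 2) * ((s-r)/v))) := by
    have hUsub : S ⊆ ⋃ i ∈ Finset.Icc (0:ℤ) ⌊u⌋,
        {y ∈ Set.Icc (((i:ℝ)+p)/u) (((i:ℝ)+q)/u) | Int.fract (v*y) ∈ Set.Icc r s} := by
      rintro y ⟨⟨hy0, hy1⟩, hfu, hfv⟩
      have hmem : ⌊u*y⌋ ∈ Finset.Icc (0:ℤ) ⌊u⌋ := by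
        simp only [Finset.mem_Icc]
        exact ⟨Int.floor_nonneg.mpr (by positivity), Int.floor_le_floor (by nlinarith)⟩
      exact Set.mem_biUnion hmem ⟨frac_mem_Icc_interval hu0 hfu, hfv⟩
    have step2 : ∀ i ∈ Finset.Icc (0:ℤ) ⌊u⌋,
        volume {y ∈ Set.Icc (((i:ℝ)+p)/u) (((i:ℝ)+q)/u) | Int.fract (v*y) ∈ Set.Icc r s}
          ≤ ENNReal.ofReal ((v*(q-p)/u + 2) * ((s-r)/v)) := by
      intro i _
      refine (frac_upper v r s (((i:ℝ)+p)/u) (((i:ℝ)+q)/u) hv0 hrs).trans ?_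
      apply ENNReal.ofReal_le_ofReal
      apply mul_le_mul_of_nonneg_right ?_ hηv
      have hd : v*(((i:ℝ)+q)/u) - v*(((i:ℝ)+p)/u) = v*(q-p)/u := by field_simp; ring
      have f1 := Int.floor_le (v*(((i:ℝ)+q)/u))
      have f2 := Int.lt_floor_add_one (v*(((i:ℝ)+p)/u))
      linarith
    have hcard : (((⌊u⌋+1).toNat : ℕ) : ℝ) = (⌊u⌋:ℝ) + 1 := by
      have h2 : ((⌊u⌋+1).toNat : ℤ) = ⌊u⌋+1 := Int.toNat_of_nonneg (by omega)
      rw [← Int.cast_natCast (R := ℝ), h2]; push_cast; ring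
    calc volume S
        ≤ ∑ i ∈ Finset.Icc (0:ℤ) ⌊u⌋,
            volume {y ∈ Set.Icc (((i:ℝ)+p)/u) (((i:ℝ)+q)/u) | Int.fract (v*y) ∈ Set.Icc r s} :=
          (measure_mono hUsub).trans (measure_biUnion_finset_le _ _)
      _ ≤ ∑ _i ∈ Finset.Icc (0:ℤ) ⌊u⌋, ENNReal.ofReal ((v*(q-p)/u + 2) * ((s-r)/v)) :=
          Finset.sum_le_sum step2
      _ = ENNReal.ofReal ((((⌊u⌋+1).toNat : ℕ) : ℝ) * ((v*(q-p)/u + 2) * ((s-r)/v))) := by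
          rw [Finset.sum_const, Int.card_Icc, nsmul_eq_mul, ← ENNReal.ofReal_natCast,
            ← ENNReal.ofReal_mul (Nat.cast_nonneg _)]
          norm_num
      _ ≤ ENNReal.ofReal ((u+1) * ((v*(q-p)/u + 2) * ((s-r)/v))) := by
          apply ENNReal.ofReal_le_ofReal
          apply mul_le_mul_of_nonneg_right ?_ hC0
          rw [hcard]; linarith
  -- LOWER BOUND
  have hlow : ENNReal.ofReal ((⌊u⌋:ℝ) * ((v*(q-p)/u - 2) * ((s-r)/v))) ≤ volume S := by
    set T : ℤ → Set ℝ :=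
      fun i => {y ∈ Set.Ico (((i:ℝ)+p)/u) (((i:ℝ)+q)/u) | Int.fract (v*y) ∈ Set.Icc r s}
      with hTdef
    have hTmeas : ∀ i : ℤ, MeasurableSet (T i) := fun i =>
      measurableSet_Ico.inter ((measurable_fract.comp (measurable_id.const_mul v)) measurableSet_Icc)
    have hTdisj : (↑(Finset.Icc (0:ℤ) (⌊u⌋-1)) : Set ℤ).PairwiseDisjoint T :=
      Set.PairwiseDisjoint.mono (Ico_pairwise u p q hu0 hp hq _)
        (fun i => Set.sep_subset _ _)
    have hLsub : (⋃ i ∈ Finset.Icc (0:ℤ) (⌊u⌋-1), T i) ⊆ S := by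
      intro y hy
      simp only [hTdef, Set.mem_iUnion, Finset.mem_Icc, exists_prop] at hy
      obtain ⟨i, ⟨hi0, hi1⟩, ⟨hy1, hy2⟩, hfv⟩ := hy
      have hi0R : (0:ℝ) ≤ (i:ℝ) := by exact_mod_cast hi0
      have hi1R : (i:ℝ) ≤ (⌊u⌋:ℝ) - 1 := by
        have h3 : (i:ℝ) ≤ ((⌊u⌋-1 : ℤ):ℝ) := by exact_mod_cast hi1
        push_cast at h3; linarith
      have hyv1 : (i:ℝ) + p ≤ u * y := by rw [div_le_iff₀ hu0] at hy1; linarith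
      have hyv2 : u * y < (i:ℝ) + q := by have := (lt_div_iff₀ hu0).mp hy2; linarith
      have hfloor : ⌊u * y⌋ = i := by
        apply Int.floor_eq_iff.mpr; constructor <;> push_cast <;> nlinarith
      have hfract : Int.fract (u*y) = u*y - i := by rw [Int.fract, hfloor]
      have hd0 : 0 ≤ ((i:ℝ)+p)/u := div_nonneg (by linarith) hu0.le
      have hd1 : ((i:ℝ)+q)/u ≤ (⌊u⌋:ℝ)/u := by gcongr ?_/u; linarith
      have hd2 : (⌊u⌋:ℝ)/u ≤ 1 := by rw [div_le_one hu0]; exact hfle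
      refine ⟨⟨by linarith, by linarith⟩, ⟨?_, ?_⟩, hfv⟩
      · rw [hfract]; linarith
      · rw [hfract]; linarith
    have hTlow : ∀ i ∈ Finset.Icc (0:ℤ) (⌊u⌋-1),
        ENNReal.ofReal ((v*(q-p)/u - 2) * ((s-r)/v)) ≤ volume (T i) := by
      intro i _
      have hml := frac_lower v r s (((i:ℝ)+p)/u) (((i:ℝ)+q)/u)
        (⌊v*(((i:ℝ)+p)/u)⌋+1) (⌊v*(((i:ℝ)+q)/u)⌋-1) hv0 hr hrs hs
        (by
          have h4 := Int.lt_floor_add_one (v*(((i:ℝ)+p)/u))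
          rw [le_div_iff₀ hv0]
          push_cast
          nlinarith)
        (by
          have h4 := Int.floor_le (v*(((i:ℝ)+q)/u))
          rw [div_le_iff₀ hv0]
          push_cast
          nlinarith)
      refine le_trans ?_ hml
      apply ENNReal.ofReal_le_ofReal
      apply mul_le_mul_of_nonneg_right ?_ hηv
      have hd : v*(((i:ℝ)+q)/u) - v*(((i:ℝ)+p)/u) = v*(q-p)/u := by field_simp; ring
      have f1 := Int.floor_le (v*(((i:ℝ)+p)/u))
      have f2 := Int.lt_floor_add_one (v*(((i:ℝ)+q)/u))
      push_cast
      linarith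
    have hcard : (((⌊u⌋-1+1-0).toNat : ℕ) : ℝ) = (⌊u⌋:ℝ) := by
      have h2 : ((⌊u⌋-1+1-0).toNat : ℤ) = ⌊u⌋ := by rw [Int.toNat_of_nonneg (by omega)]; ring
      rw [← Int.cast_natCast (R := ℝ), h2]
    calc ENNReal.ofReal ((⌊u⌋:ℝ) * ((v*(q-p)/u - 2) * ((s-r)/v)))
        ≤ ∑ _i ∈ Finset.Icc (0:ℤ) (⌊u⌋-1), ENNReal.ofReal ((v*(q-p)/u - 2) * ((s-r)/v)) := by
          rw [Finset.sum_const, Int.card_Icc]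
          rcases le_or_gt 0 ((v*(q-p)/u - 2) * ((s-r)/v)) with hX0 | hX0
          · rw [nsmul_eq_mul, ← ENNReal.ofReal_natCast,
              ← ENNReal.ofReal_mul (Nat.cast_nonneg _), hcard]
          · rw [ENNReal.ofReal_eq_zero.mpr (by
              have h6 := mul_le_mul_of_nonneg_left hX0.le
                (show (0:ℝ) ≤ (⌊u⌋:ℝ) by linarith)
              simpa using h6)]
            exact zero_le
      _ ≤ ∑ i ∈ Finset.Icc (0:ℤ) (⌊u⌋-1), volume (T i) := Finset.sum_le_sum hTlow
      _ = volume (⋃ i ∈ Finset.Icc (0:ℤ) (⌊u⌋-1), T i) :=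
          (measure_biUnion_finset hTdisj (fun i _ => hTmeas i)).symm
      _ ≤ volume S := measure_mono hLsub
  -- convert to real
  have hU' : (volume S).toReal ≤ (u+1) * ((v*ε/u + 2) * (η/v)) := by
    rw [← hεeq, ← hηeq]
    exact ENNReal.toReal_le_of_le_ofReal (mul_nonneg (by linarith) hC0) hup
  have hL' : (⌊u⌋:ℝ) * ((v*ε/u - 2) * (η/v)) ≤ (volume S).toReal := by
    rw [← hεeq, ← hηeq]
    rcases le_or_gt ((⌊u⌋:ℝ) * ((v*(q-p)/u - 2) * ((s-r)/v))) 0 with h | h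
    · exact h.trans ENNReal.toReal_nonneg
    · exact (ENNReal.ofReal_le_iff_le_toReal hne).mp hlow
  -- final arithmetic
  have n1 : 0 ≤ (ε/u)*η := mul_nonneg (div_nonneg hε hu0.le) hη
  have n2 : 0 ≤ (u/v)*η := mul_nonneg (div_nonneg hu0.le hv0.le) hη
  have n3 : 0 ≤ (1/v)*η := mul_nonneg (by positivity) hη
  have n4 : 0 ≤ (1/u)*η := mul_nonneg (by positivity) hη
  have e1 : (u+1)*((v*ε/u + 2)*(η/v)) = ε*η + (ε/u)*η + 2*(u/v)*η + 2*(1/v)*η := by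
    field_simp; ring
  have e3 : u*((v*ε/u - 2)*(η/v)) = ε*η - 2*(u/v)*η := by field_simp
  have e4 : (v*ε/u - 2)*(η/v) = (ε/u)*η - 2*(1/v)*η := by field_simp
  have hL'' : ε*η - (ε/u)*η - 2*(u/v)*η - 2*(1/v)*η ≤ (volume S).toReal := by
    rcases le_or_gt 0 ((v*ε/u - 2)*(η/v)) with hY | hY
    · have h5 : (u-1)*((v*ε/u - 2)*(η/v)) ≤ (⌊u⌋:ℝ)*((v*ε/u - 2)*(η/v)) :=
        mul_le_mul_of_nonneg_right hu1 hY
      nlinarith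
    · have h5 : u*((v*ε/u - 2)*(η/v)) ≤ (⌊u⌋:ℝ)*((v*ε/u - 2)*(η/v)) :=
        mul_le_mul_of_nonpos_right hfle hY.le
      linarith
  have hU'' : (volume S).toReal ≤ ε*η + (ε/u)*η + 2*(u/v)*η + 2*(1/v)*η := by
    rw [← e1]; exact hU'
  rw [abs_le]
  constructor
  · linarith
  · linarith

/-- for `u ≥ 1` and an interval `I ⊆ [0,1]` with `λ(I) = ε`,
the set `u^{-1}(I) = {y ∈ [0,1] : frac(u y) ∈ I}` satisfies
`|λ(u^{-1}(I)) − ε| ≤ ε/u`; moreover, up to an absolute constant, for `u < v`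
and intervals `I, J` of measures `ε, η`,
`|λ(u^{-1}(I) ∩ v^{-1}(J)) − εη| ≤ C η (u/v + ε/u + 1/u + 1/v)`. -/
theorem preimage_measure_estimates (a : ℝ) (ha : a ∈ Set.Ioo (0:ℝ) 1) :
    (∀ (u ε : ℝ) (I : Set ℝ), 1 ≤ u → 0 ≤ ε → I ⊆ Set.Icc (0:ℝ) 1 →
      (∃ p q : ℝ, I = Set.Icc p q) → volume I = ENNReal.ofReal ε →
      |(volume {y ∈ Set.Icc (0:ℝ) 1 | Int.fract (u * y) ∈ I}).toReal - ε| ≤ ε / u) ∧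
    (∃ C : ℝ, 0 < C ∧ ∀ (u v ε η : ℝ) (I J : Set ℝ), 1 ≤ u → u < v →
      0 ≤ ε → 0 ≤ η →
      I ⊆ Set.Icc (0:ℝ) 1 → J ⊆ Set.Icc (0:ℝ) 1 →
      (∃ p q : ℝ, I = Set.Icc p q) → (∃ p q : ℝ, J = Set.Icc p q) →
      volume I = ENNReal.ofReal ε → volume J = ENNReal.ofReal η →
      |(volume {y ∈ Set.Icc (0:ℝ) 1 |
          Int.fract (u * y) ∈ I ∧ Int.fract (v * y) ∈ J}).toReal - ε * η|
        ≤ C * (η * (u / v + ε / u + 1 / u + 1 / v))) := by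
  constructor
  · exact fun u ε I hu hε hI hIq hvol => part1 u ε I hu hε hI hIq hvol
  · exact ⟨4, by norm_num,
      fun u v ε η I J hu huv hε hη hI hJ hIq hJq hvI hvJ =>
        part2 u v ε η I J hu huv hε hη hI hJ hIq hJq hvI hvJ⟩
end
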